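/- arXiv:math-ph/0305044 — 4 statements merged into one kernel-verified Lean document; each statement's English description precedes it below -/
import Mathlib

section
/- Let N ≥ 1 and let b_0 < a_1 < b_1 < ⋯ < a_N < b_N < a_{N+1} be real numbers. Let A be the N×N matrix with entries A_{kj} = ∫_{a_j}^{b_j} x^{k−1} / R^{1/2}(x) dx for k, j = 1,…,N. Then: (i) all entries of A are real; (ii) A is invertible; (iii) for any α ∈ ℝ, the unique solution (ξ_1,…,ξ_N) ∈ ℂ^N of the linear system Σ_{j=1}^N A_{kj} ξ_j = −(1/(2πi)) ∫_J 2α·log|x| · x^{k−1} / R_+^{1/2}(x) dx (k = 1,…,N) has all entries real. -/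
open MeasureTheory Filter Set intervalIntegral

/-- `R(z) = ∏_{j=1}^{N+1} (z − b_{j−1})(z − a_j)`, reindexed as
`∏_{j=0}^{N} (z − b_j)(z − a_{j+1})`. -/
noncomputable def Rpoly (N : ℕ) (a b : ℕ → ℝ) (z : ℂ) : ℂ :=
  ∏ j ∈ Finset.range (N + 1), ((z - (b j : ℂ)) * (z - (a (j + 1) : ℂ)))

/-! ### Auxiliary definitions and lemmas -/

/-- The real-valued version of `Rpoly` on the real axis. -/
noncomputable def Rre (N : ℕ) (a b : ℕ → ℝ) (x : ℝ) : ℝ :=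
  ∏ i ∈ Finset.range (N + 1), ((x - b i) * (x - a (i + 1)))

lemma Rpoly_ofReal (N : ℕ) (a b : ℕ → ℝ) (x : ℝ) :
    Rpoly N a b (x : ℂ) = ((Rre N a b x : ℝ) : ℂ) := by
  rw [Rpoly, Rre]
  push_cast
  rfl

lemma sq_real {c : ℂ} {r : ℝ} (h : c ^ 2 = (r : ℂ)) (hr : 0 < r) : c.im = 0 := by
  have h1 : 2 * (c.re * c.im) = 0 := by
    have := congrArg Complex.im h
    simpa [pow_two, Complex.mul_im, mul_comm, two_mul] using this
  have h2 : c.re * c.re - c.im * c.im = r := by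
    have := congrArg Complex.re h
    simpa [pow_two, Complex.mul_re] using this
  rcases mul_eq_zero.mp h1 with h1' | h1'
  · norm_num at h1'
  rcases mul_eq_zero.mp h1' with h | h
  · nlinarith
  · exact h

lemma sq_imag {c : ℂ} {r : ℝ} (h : c ^ 2 = (r : ℂ)) (hr : r < 0) : c.re = 0 := by
  have h1 : 2 * (c.re * c.im) = 0 := by
    have := congrArg Complex.im h
    simpa [pow_two, Complex.mul_im, mul_comm, two_mul] using this
  have h2 : c.re * c.re - c.im * c.im = r := by
    have := congrArg Complex.re h
    simpa [pow_two, Complex.mul_re] using this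
  rcases mul_eq_zero.mp h1 with h1' | h1'
  · norm_num at h1'
  rcases mul_eq_zero.mp h1' with h | h
  · exact h
  · nlinarith

lemma sign_const {f : ℝ → ℝ} {s : Set ℝ} (hs : s.OrdConnected) (hf : ContinuousOn f s)
    (h0 : ∀ x ∈ s, f x ≠ 0) {x y : ℝ} (hx : x ∈ s) (hy : y ∈ s) (hfx : 0 < f x) : 0 < f y := by
  by_contra hfy
  have hfy' : f y < 0 := lt_of_le_of_ne (not_lt.mp hfy) (h0 y hy)
  have hsub : uIcc x y ⊆ s := hs.uIcc_subset hx hy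
  have h0mem : (0 : ℝ) ∈ uIcc (f x) (f y) := by
    rw [Set.mem_uIcc]; right; exact ⟨hfy'.le, hfx.le⟩
  obtain ⟨z, hz, hz0⟩ := intermediate_value_uIcc (hf.mono hsub) h0mem
  exact h0 z (hsub hz) hz0

lemma ae_ne_pt (B : ℝ) : ∀ᵐ x : ℝ, x ≠ B := by
  have := measure_eq_zero_iff_ae_notMem.mp (measure_singleton (μ := (volume : Measure ℝ)) B)
  simpa using this

lemma integral_congr_ioo {E : Type*} [NormedAddCommGroup E] [NormedSpace ℝ E]
    {f g : ℝ → E} {A B : ℝ} (h : A ≤ B) (he : ∀ x ∈ Ioo A B, f x = g x) :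
    ∫ x in A..B, f x = ∫ x in A..B, g x := by
  apply intervalIntegral.integral_congr_ae
  filter_upwards [ae_ne_pt B] with x hx hmem
  rw [uIoc_of_le h] at hmem
  exact he x ⟨hmem.1, hmem.2.lt_of_ne hx⟩

lemma intervalIntegrable_of_ioo {E : Type*} [NormedAddCommGroup E]
    {f : ℝ → E} {A B : ℝ} (h : A ≤ B) (hf : IntegrableOn f (Ioo A B) volume) :
    IntervalIntegrable f volume A B := by
  rw [intervalIntegrable_iff_integrableOn_Ioc_of_le h, IntegrableOn,
    ← Measure.restrict_congr_set Ioo_ae_eq_Ioc]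
  exact hf

lemma clm_integral_zero (L : ℂ →L[ℝ] ℝ) {f : ℝ → ℂ} {A B : ℝ} (h : A ≤ B)
    (he : ∀ x ∈ Ioo A B, L (f x) = 0) : L (∫ x in A..B, f x) = 0 := by
  by_cases hi : IntervalIntegrable f volume A B
  · rw [← L.intervalIntegral_comp_comm hi]
    rw [integral_congr_ioo h (g := fun _ => (0:ℝ)) he]
    simp
  · rw [intervalIntegral.integral_undef hi]
    simp

lemma intervalIntegrable_re {f : ℝ → ℂ} {A B : ℝ} (hf : IntervalIntegrable f volume A B) :
    IntervalIntegrable (fun x => (f x).re) volume A B := ⟨hf.1.re, hf.2.re⟩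

lemma intervalIntegrable_congr_ioo {E : Type*} [NormedAddCommGroup E] {f g : ℝ → E} {A B : ℝ}
    (h : A ≤ B) (he : ∀ x ∈ Ioo A B, f x = g x) (hf : IntervalIntegrable f volume A B) :
    IntervalIntegrable g volume A B := by
  apply intervalIntegrable_of_ioo h
  have hfi : IntegrableOn f (Ioo A B) volume := by
    rw [intervalIntegrable_iff_integrableOn_Ioc_of_le h] at hf
    exact hf.mono_set Ioo_subset_Ioc_self
  exact hfi.congr_fun he measurableSet_Ioo

lemma poly_coeff (Nn : ℕ) (c : Fin Nn → ℝ) (k : Fin Nn) :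
    (∑ i : Fin Nn, Polynomial.C (c i) * Polynomial.X ^ (i:ℕ)).coeff (k:ℕ) = c k := by
  rw [Polynomial.finset_sum_coeff]
  rw [Finset.sum_eq_single k]
  · simp [Polynomial.coeff_C_mul, Polynomial.coeff_X_pow]
  · intro i _ hik
    simp only [Polynomial.coeff_C_mul, Polynomial.coeff_X_pow]
    rw [if_neg (by simpa [Fin.val_inj] using (Ne.symm hik))]
    ring
  · intro h
    exact absurd (Finset.mem_univ k) h

section Chain

variable {N : ℕ} {a b : ℕ → ℝ}

lemma chain_b (hband : ∀ j ≤ N, b j < a (j + 1)) (hgap : ∀ j, 1 ≤ j → j ≤ N → a j < b j) :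
    ∀ d i, i + d ≤ N → b i ≤ b (i + d) := by
  intro d
  induction d with
  | zero => intro i _; rfl
  | succ d ih =>
    intro i h
    have c1 := ih i (by omega : i + d ≤ N)
    have c2 := hband (i + d) (by omega)
    have c3 := hgap (i + d + 1) (by omega) (by omega)
    have he : i + (d + 1) = i + d + 1 := by omega
    rw [he]; linarith

lemma chain_a (hband : ∀ j ≤ N, b j < a (j + 1)) (hgap : ∀ j, 1 ≤ j → j ≤ N → a j < b j) :
    ∀ d i, 1 ≤ i → i + d ≤ N + 1 → a i ≤ a (i + d) := by
  intro d
  induction d with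
  | zero => intro i _ _; rfl
  | succ d ih =>
    intro i h1 h2
    have c1 := ih i h1 (by omega)
    have c2 := hgap (i + d) (by omega) (by omega)
    have c3 := hband (i + d) (by omega)
    have he : i + (d + 1) = i + d + 1 := by omega
    rw [he]; linarith

lemma chain_b_le (hband : ∀ j ≤ N, b j < a (j + 1)) (hgap : ∀ j, 1 ≤ j → j ≤ N → a j < b j)
    {i j : ℕ} (hij : i ≤ j) (hj : j ≤ N) : b i ≤ b j := by
  obtain ⟨d, rfl⟩ := Nat.exists_eq_add_of_le hij
  exact chain_b hband hgap d i hj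

lemma chain_a_le (hband : ∀ j ≤ N, b j < a (j + 1)) (hgap : ∀ j, 1 ≤ j → j ≤ N → a j < b j)
    {i j : ℕ} (h1 : 1 ≤ i) (hij : i ≤ j) (hj : j ≤ N + 1) : a i ≤ a j := by
  obtain ⟨d, rfl⟩ := Nat.exists_eq_add_of_le hij
  exact chain_a hband hgap d i h1 hj

/-- points of an open gap are not in any closed band -/
lemma gap_not_band (hband : ∀ j ≤ N, b j < a (j + 1)) (hgap : ∀ j, 1 ≤ j → j ≤ N → a j < b j)
    {j : ℕ} (hj1 : 1 ≤ j) (hjN : j ≤ N) {x : ℝ} (hx : x ∈ Ioo (a j) (b j)) :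
    ¬((x:ℂ).im = 0 ∧ ∃ i ≤ N, b i ≤ (x:ℂ).re ∧ (x:ℂ).re ≤ a (i + 1)) := by
  rintro ⟨-, i, hiN, h1, h2⟩
  rw [Complex.ofReal_re] at h1 h2
  rcases le_or_gt (i + 1) j with hij | hij
  · have : a (i + 1) ≤ a j := chain_a_le hband hgap (by omega) hij (by omega)
    linarith [hx.1]
  · have : b j ≤ b i := chain_b_le hband hgap (by omega) hiN
    linarith [hx.2]

/-- the real product `Rre` is positive on open gaps -/
lemma Rre_pos_gap (hband : ∀ j ≤ N, b j < a (j + 1)) (hgap : ∀ j, 1 ≤ j → j ≤ N → a j < b j)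
    {j : ℕ} (hj1 : 1 ≤ j) (hjN : j ≤ N) {x : ℝ} (hx : x ∈ Ioo (a j) (b j)) :
    0 < Rre N a b x := by
  apply Finset.prod_pos
  intro i hi
  have hiN : i ≤ N := by simpa [Nat.lt_succ_iff] using hi
  rcases le_or_gt j i with hij | hij
  · apply mul_pos_of_neg_of_neg
    · have : b j ≤ b i := chain_b_le hband hgap hij hiN
      linarith [hx.2]
    · have h1 : a (j + 1) ≤ a (i + 1) := chain_a_le hband hgap (by omega) (by omega) (by omega)
      have h2 : b j < a (j + 1) := hband j hjN
      linarith [hx.2]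
  · apply mul_pos
    · have h1 : b i < a (i + 1) := hband i (by omega)
      have h2 : a (i + 1) ≤ a j := chain_a_le hband hgap (by omega) (by omega) (by omega)
      linarith [hx.1]
    · have h2 : a (i + 1) ≤ a j := chain_a_le hband hgap (by omega) (by omega) (by omega)
      linarith [hx.1]

/-- `Rre` is negative on open bands -/
lemma Rre_neg_band (hband : ∀ j ≤ N, b j < a (j + 1)) (hgap : ∀ j, 1 ≤ j → j ≤ N → a j < b j)
    {i : ℕ} (hiN : i ≤ N) {x : ℝ} (hx : x ∈ Ioo (b i) (a (i + 1))) :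
    Rre N a b x < 0 := by
  rw [Rre, ← Finset.mul_prod_erase _ _ (Finset.mem_range.mpr (by omega : i < N + 1))]
  apply mul_neg_of_neg_of_pos
  · apply mul_neg_of_pos_of_neg
    · linarith [hx.1]
    · linarith [hx.2]
  · apply Finset.prod_pos
    intro k hk
    have hkN : k ≤ N := by
      have := Finset.mem_of_mem_erase hk
      simpa [Nat.lt_succ_iff] using this
    have hki : k ≠ i := Finset.ne_of_mem_erase hk
    rcases lt_or_gt_of_ne hki with h | h
    · apply mul_pos
      · have h1 : b k < a (k + 1) := hband k (by omega)
        have h2 : a (k + 1) ≤ a i := chain_a_le hband hgap (by omega) (by omega) (by omega)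
        have h3 : a i < b i := hgap i (by omega) (by omega)
        linarith [hx.1]
      · have h2 : a (k + 1) ≤ a i := chain_a_le hband hgap (by omega) (by omega) (by omega)
        have h3 : a i < b i := hgap i (by omega) (by omega)
        linarith [hx.1]
    · apply mul_pos_of_neg_of_neg
      · have h1 : a (i + 1) ≤ a k := chain_a_le hband hgap (by omega) h (by omega)
        have h2 : a k < b k := hgap k (by omega) (by omega)
        linarith [hx.2]
      · have h1 : a (i + 1) ≤ a (k + 1) := chain_a_le hband hgap (by omega) (by omega) (by omega)
        linarith [hx.2]

/-- Main facts about `Rhalf` on an open gap: it is real valued and nonvanishing there,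
continuous, and `x^k / Rhalf x` is interval integrable over the gap. -/
lemma gap_main
    (hband : ∀ j ≤ N, b j < a (j + 1)) (hgap : ∀ j, 1 ≤ j → j ≤ N → a j < b j)
    (Rhalf : ℂ → ℂ)
    (hRan : ∀ z : ℂ, ¬(z.im = 0 ∧ ∃ j ≤ N, b j ≤ z.re ∧ z.re ≤ a (j + 1)) → AnalyticAt ℂ Rhalf z)
    (hRsq : ∀ z : ℂ, ¬(z.im = 0 ∧ ∃ j ≤ N, b j ≤ z.re ∧ z.re ≤ a (j + 1)) →
      (Rhalf z) ^ 2 = Rpoly N a b z)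
    {j : ℕ} (hj1 : 1 ≤ j) (hjN : j ≤ N) :
    (∀ x ∈ Ioo (a j) (b j), Rhalf (x:ℂ) = (((Rhalf (x:ℂ)).re : ℝ) : ℂ) ∧ (Rhalf (x:ℂ)).re ≠ 0) ∧
    ContinuousOn (fun x : ℝ => Rhalf (x:ℂ)) (Ioo (a j) (b j)) ∧
    (∀ k : ℕ, IntervalIntegrable (fun x : ℝ => (x:ℂ)^k / Rhalf (x:ℂ)) volume (a j) (b j)) := by
  have hord : a j < b j := hgap j hj1 hjN
  have hnb : ∀ x ∈ Ioo (a j) (b j),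
      ¬((x:ℂ).im = 0 ∧ ∃ i ≤ N, b i ≤ (x:ℂ).re ∧ (x:ℂ).re ≤ a (i + 1)) :=
    fun x hx => gap_not_band hband hgap hj1 hjN hx
  have hsq : ∀ x ∈ Ioo (a j) (b j), (Rhalf (x:ℂ))^2 = ((Rre N a b x : ℝ) : ℂ) := by
    intro x hx
    rw [hRsq (x:ℂ) (hnb x hx), Rpoly_ofReal]
  have hpos : ∀ x ∈ Ioo (a j) (b j), 0 < Rre N a b x :=
    fun x hx => Rre_pos_gap hband hgap hj1 hjN hx
  have hre1 : ∀ x ∈ Ioo (a j) (b j),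
      Rhalf (x:ℂ) = (((Rhalf (x:ℂ)).re : ℝ) : ℂ) ∧ (Rhalf (x:ℂ)).re ≠ 0 := by
    intro x hx
    have him : (Rhalf (x:ℂ)).im = 0 := sq_real (hsq x hx) (hpos x hx)
    have heq : Rhalf (x:ℂ) = (((Rhalf (x:ℂ)).re : ℝ) : ℂ) := by
      apply Complex.ext <;> simp [him]
    refine ⟨heq, fun h0 => ?_⟩
    have hz : Rhalf (x:ℂ) = 0 := by rw [heq, h0]; simp
    have h2 := hsq x hx
    rw [hz] at h2
    have h3 : Rre N a b x = 0 := by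
      have h4 : ((0:ℝ):ℂ) = ((Rre N a b x : ℝ) : ℂ) := by simpa using h2
      exact_mod_cast h4.symm
    nlinarith [hpos x hx]
  have hcont : ContinuousOn (fun x : ℝ => Rhalf (x:ℂ)) (Ioo (a j) (b j)) := by
    intro x hx
    exact ((hRan (x:ℂ) (hnb x hx)).continuousAt.comp
      Complex.continuous_ofReal.continuousAt).continuousWithinAt
  refine ⟨hre1, hcont, ?_⟩
  -- factorization
  obtain ⟨j', rfl⟩ : ∃ j'', j = j'' + 1 := ⟨j - 1, by omega⟩
  set A0 := a (j' + 1) with hA0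
  set B0 := b (j' + 1) with hB0
  set q : ℝ → ℝ := fun x => ((x - b j') * (x - a (j' + 2))) *
    ∏ i ∈ ((Finset.range (N + 1)).erase j').erase (j' + 1), ((x - b i) * (x - a (i + 1)))
    with hq
  have mem1 : j' ∈ Finset.range (N + 1) := Finset.mem_range.mpr (by omega)
  have mem2 : j' + 1 ∈ (Finset.range (N + 1)).erase j' :=
    Finset.mem_erase.mpr ⟨by omega, Finset.mem_range.mpr (by omega)⟩
  have hfact : ∀ x : ℝ, Rre N a b x = ((x - A0) * (x - B0)) * q x := by
    intro x
    rw [Rre, ← Finset.mul_prod_erase _ _ mem1, ← Finset.mul_prod_erase _ _ mem2, hq]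
    ring
  have hqcont : Continuous q := by
    apply Continuous.mul
    · fun_prop
    · exact continuous_finset_prod _ (fun i _ => by fun_prop)
  have hqne : ∀ x ∈ Icc A0 B0, q x ≠ 0 := by
    intro x hx
    apply mul_ne_zero
    · apply mul_ne_zero
      · have h1 : b j' < A0 := hband j' (by omega)
        have h2 := hx.1
        intro h; nlinarith
      · have h1 : B0 < a (j' + 2) := hband (j' + 1) (by omega)
        have h2 := hx.2
        intro h; nlinarith
    · rw [Finset.prod_ne_zero_iff]
      intro i hi
      have hiN : i ≤ N := by
        have := Finset.mem_of_mem_erase (Finset.mem_of_mem_erase hi)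
        simpa [Nat.lt_succ_iff] using this
      have hi1 : i ≠ j' + 1 := Finset.ne_of_mem_erase hi
      have hi2 : i ≠ j' := Finset.ne_of_mem_erase (Finset.mem_of_mem_erase hi)
      apply mul_ne_zero
      · rcases lt_or_gt_of_ne hi2 with h | h
        · have h1 : b i < a (i + 1) := hband i (by omega)
          have h2 : a (i + 1) ≤ A0 := chain_a_le hband hgap (by omega) (by omega) (by omega)
          have h3 := hx.1
          intro hc; nlinarith
        · have h1 : B0 < a (j' + 2) := hband (j' + 1) (by omega)
          have h2 : a (j' + 2) ≤ a i := chain_a_le hband hgap (by omega) (by omega) (by omega)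
          have h3 : a i < b i := hgap i (by omega) (by omega)
          have h4 := hx.2
          intro hc; nlinarith
      · rcases lt_or_gt_of_ne hi2 with h | h
        · have h1 : a (i + 1) ≤ a j' := chain_a_le hband hgap (by omega) (by omega) (by omega)
          have h2 : a j' < b j' := hgap j' (by omega) (by omega)
          have h3 : b j' < A0 := hband j' (by omega)
          have h4 := hx.1
          intro hc; nlinarith
        · have h1 : B0 < a (j' + 2) := hband (j' + 1) (by omega)
          have h2 : a (j' + 2) ≤ a (i + 1) := chain_a_le hband hgap (by omega) (by omega) (by omega)
          have h3 := hx.2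
          intro hc; nlinarith
  have hmid : (A0 + B0) / 2 ∈ Ioo A0 B0 := by
    constructor <;> (simp only [mem_Ioo] at *; linarith)
  have hqneg_int : ∀ x ∈ Ioo A0 B0, q x < 0 := by
    intro x hx
    have h1 := hpos x hx
    have h2 : (x - A0) * (x - B0) < 0 :=
      mul_neg_of_pos_of_neg (by linarith [hx.1]) (by linarith [hx.2])
    by_contra hcon
    push_neg at hcon
    nlinarith [hfact x]
  have hqneg : ∀ x ∈ Icc A0 B0, q x < 0 := by
    intro y hy
    by_contra hcon
    push_neg at hcon
    have hqy : 0 < q y := lt_of_le_of_ne hcon (Ne.symm (hqne y hy))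
    have := sign_const ordConnected_Icc hqcont.continuousOn hqne hy
      (Ioo_subset_Icc_self hmid) hqy
    exact absurd this (not_lt.mpr (hqneg_int _ hmid).le)
  obtain ⟨x0, hx0, hmin⟩ := isCompact_Icc.exists_isMinOn (nonempty_Icc.mpr hord.le)
    (hqcont.neg.continuousOn)
  set m := -q x0 with hm_def
  have hm : 0 < m := by
    have := hqneg x0 hx0
    simp only [hm_def]; linarith
  have hlow : ∀ x ∈ Ioo A0 B0, m * ((x - A0) * (B0 - x)) ≤ Rre N a b x := by
    intro x hx
    have h1 : -q x0 ≤ -q x := hmin (Ioo_subset_Icc_self hx)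
    have h2 : 0 ≤ (x - A0) * (B0 - x) := by nlinarith [hx.1, hx.2]
    calc m * ((x - A0) * (B0 - x)) ≤ (-q x) * ((x - A0) * (B0 - x)) :=
          mul_le_mul_of_nonneg_right h1 h2
      _ = Rre N a b x := by rw [hfact x]; ring
  -- integrability
  intro k
  set M := max |A0| |B0| with hM_def
  have hM0 : 0 ≤ M := le_trans (abs_nonneg A0) (le_max_left _ _)
  set sB := Real.sqrt ((B0 - A0) / 2) with hsB_def
  have hsB : 0 < sB := Real.sqrt_pos.mpr (by linarith)
  set K := M ^ k / (Real.sqrt m * sB) with hK_def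
  have g1 : IntervalIntegrable (fun x => (x - A0) ^ (-(1/2) : ℝ)) volume A0 B0 := by
    have h0 := intervalIntegral.intervalIntegrable_rpow' (a := 0) (b := B0 - A0)
      (r := -(1/2)) (by norm_num)
    have h1 := h0.comp_sub_right A0
    simpa [sub_add_cancel] using h1
  have g2 : IntervalIntegrable (fun x => (B0 - x) ^ (-(1/2) : ℝ)) volume A0 B0 := by
    have h0 := intervalIntegral.intervalIntegrable_rpow' (a := 0) (b := B0 - A0)
      (r := -(1/2)) (by norm_num)
    have h1 := (h0.comp_sub_left B0).symm
    simpa using h1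
  set G : ℝ → ℝ := fun x => K * ((x - A0) ^ (-(1/2) : ℝ) + (B0 - x) ^ (-(1/2) : ℝ)) with hG_def
  have hG : IntervalIntegrable G volume A0 B0 := (g1.add g2).const_mul K
  have hGIoo : IntegrableOn G (Ioo A0 B0) volume :=
    ((intervalIntegrable_iff_integrableOn_Ioc_of_le hord.le).mp hG).mono_set Ioo_subset_Ioc_self
  have hRne : ∀ x ∈ Ioo A0 B0, Rhalf (x:ℂ) ≠ 0 := by
    intro x hx
    rw [(hre1 x hx).1]
    exact_mod_cast Complex.ofReal_ne_zero.mpr (hre1 x hx).2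
  have hfm : AEStronglyMeasurable (fun x : ℝ => (x:ℂ)^k / Rhalf (x:ℂ))
      (volume.restrict (Ioo A0 B0)) := by
    apply ContinuousOn.aestronglyMeasurable _ measurableSet_Ioo
    exact ContinuousOn.div (by fun_prop) hcont hRne
  apply intervalIntegrable_of_ioo hord.le
  apply Integrable.mono' hGIoo hfm
  rw [ae_restrict_iff' measurableSet_Ioo]
  apply ae_of_all
  intro x hx
  obtain ⟨hx1, hx2⟩ := hx
  have hu : (0:ℝ) < x - A0 := by linarith
  have hv : (0:ℝ) < B0 - x := by linarith
  obtain ⟨r, hRx, hsq'⟩ : ∃ r : ℝ, Rhalf (x:ℂ) = (r:ℂ) ∧ r^2 = Rre N a b x := by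
    refine ⟨(Rhalf (x:ℂ)).re, (hre1 x ⟨hx1, hx2⟩).1, ?_⟩
    have h := hsq x ⟨hx1, hx2⟩
    rw [(hre1 x ⟨hx1, hx2⟩).1] at h
    exact_mod_cast h
  have hRrepos := hpos x ⟨hx1, hx2⟩
  have habs : |r| = Real.sqrt (Rre N a b x) := by rw [← hsq', Real.sqrt_sq_eq_abs]
  have hnorm : ‖(x:ℂ)^k / Rhalf (x:ℂ)‖ = |x|^k / Real.sqrt (Rre N a b x) := by
    rw [norm_div, norm_pow, Complex.norm_real, Real.norm_eq_abs, hRx, Complex.norm_real,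
      Real.norm_eq_abs, habs]
  have hxM : |x| ≤ M := abs_le_max_abs_abs hx1.le hx2.le
  have hMk : |x|^k ≤ M^k := pow_le_pow_left₀ (abs_nonneg x) hxM k
  have hsqrt_low : Real.sqrt m * (Real.sqrt (x - A0) * Real.sqrt (B0 - x))
      ≤ Real.sqrt (Rre N a b x) := by
    rw [← Real.sqrt_mul hu.le, ← Real.sqrt_mul hm.le]
    exact Real.sqrt_le_sqrt (hlow x ⟨hx1, hx2⟩)
  have hsu : 0 < Real.sqrt (x - A0) := Real.sqrt_pos.mpr hu
  have hsv : 0 < Real.sqrt (B0 - x) := Real.sqrt_pos.mpr hv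
  have hsm : 0 < Real.sqrt m := Real.sqrt_pos.mpr hm
  have step1 : ‖(x:ℂ)^k / Rhalf (x:ℂ)‖
      ≤ M^k / (Real.sqrt m * (Real.sqrt (x - A0) * Real.sqrt (B0 - x))) := by
    rw [hnorm]
    exact div_le_div₀ (pow_nonneg hM0 k) hMk (by positivity) hsqrt_low
  have hsB_le : sB ≤ Real.sqrt (x - A0) + Real.sqrt (B0 - x) := by
    rcases le_total (x - A0) (B0 - x) with h | h
    · have h2 : (B0 - A0) / 2 ≤ B0 - x := by linarith
      calc sB ≤ Real.sqrt (B0 - x) := Real.sqrt_le_sqrt h2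
        _ ≤ _ := le_add_of_nonneg_left (Real.sqrt_nonneg _)
    · have h2 : (B0 - A0) / 2 ≤ x - A0 := by linarith
      calc sB ≤ Real.sqrt (x - A0) := Real.sqrt_le_sqrt h2
        _ ≤ _ := le_add_of_nonneg_right (Real.sqrt_nonneg _)
  have step2 : M^k / (Real.sqrt m * (Real.sqrt (x - A0) * Real.sqrt (B0 - x)))
      ≤ K * ((Real.sqrt (x - A0))⁻¹ + (Real.sqrt (B0 - x))⁻¹) := by
    rw [div_le_iff₀ (by positivity)]
    have hKm : K * ((Real.sqrt (x - A0))⁻¹ + (Real.sqrt (B0 - x))⁻¹) *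
        (Real.sqrt m * (Real.sqrt (x - A0) * Real.sqrt (B0 - x)))
        = (M^k / sB) * (Real.sqrt (B0 - x) + Real.sqrt (x - A0)) := by
      rw [hK_def]
      field_simp
    rw [hKm, div_mul_eq_mul_div, le_div_iff₀ hsB]
    calc M^k * sB ≤ M^k * (Real.sqrt (x - A0) + Real.sqrt (B0 - x)) :=
          mul_le_mul_of_nonneg_left hsB_le (pow_nonneg hM0 k)
      _ = M^k * (Real.sqrt (B0 - x) + Real.sqrt (x - A0)) := by ring
  have hrpu : (x - A0) ^ (-(1/2) : ℝ) = (Real.sqrt (x - A0))⁻¹ := by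
    rw [Real.rpow_neg hu.le, ← Real.sqrt_eq_rpow]
  have hrpv : (B0 - x) ^ (-(1/2) : ℝ) = (Real.sqrt (B0 - x))⁻¹ := by
    rw [Real.rpow_neg hv.le, ← Real.sqrt_eq_rpow]
  have hGx : G x = K * ((Real.sqrt (x - A0))⁻¹ + (Real.sqrt (B0 - x))⁻¹) := by
    simp only [hG_def]
    rw [hrpu, hrpv]
  rw [hGx]
  exact le_trans step1 step2

/-- On open bands, the boundary value `Rplus` is purely imaginary. -/
lemma band_re_zero
    (hband : ∀ j ≤ N, b j < a (j + 1)) (hgap : ∀ j, 1 ≤ j → j ≤ N → a j < b j)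
    (Rhalf : ℂ → ℂ) (Rplus : ℝ → ℂ)
    (hRsq : ∀ z : ℂ, ¬(z.im = 0 ∧ ∃ j ≤ N, b j ≤ z.re ∧ z.re ≤ a (j + 1)) →
      (Rhalf z) ^ 2 = Rpoly N a b z)
    (hRplus : ∀ x : ℝ, (∃ j ≤ N, b j < x ∧ x < a (j + 1)) →
      Tendsto (fun ε : ℝ => Rhalf ((x : ℂ) + ε * Complex.I))
        (nhdsWithin 0 (Ioi 0)) (nhds (Rplus x)))
    {i : ℕ} (hiN : i ≤ N) {x : ℝ} (hx : x ∈ Ioo (b i) (a (i + 1))) :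
    (Rplus x).re = 0 := by
  have hlim := hRplus x ⟨i, hiN, hx.1, hx.2⟩
  have hsq_eps : ∀ ε ∈ Ioi (0:ℝ),
      (Rhalf ((x:ℂ) + ε * Complex.I)) ^ 2 = Rpoly N a b ((x:ℂ) + ε * Complex.I) := by
    intro ε hε
    apply hRsq
    rintro ⟨h1, -⟩
    simp only [Complex.add_im, Complex.ofReal_im, Complex.mul_im, Complex.ofReal_re,
      Complex.I_im, Complex.I_re, Complex.ofReal_im, mul_zero, mul_one, zero_add] at h1
    rw [mem_Ioi] at hε
    linarith
  have hc : Continuous (Rpoly N a b) := by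
    unfold Rpoly
    exact continuous_finset_prod _ (fun i _ => by fun_prop)
  have hmap : Tendsto (fun ε : ℝ => (x:ℂ) + ε * Complex.I) (nhdsWithin 0 (Ioi 0))
      (nhds ((x:ℂ))) := by
    have h1 : Continuous (fun ε : ℝ => (x:ℂ) + ε * Complex.I) := by fun_prop
    have h2 := (h1.tendsto 0).mono_left (nhdsWithin_le_nhds (s := Ioi (0:ℝ)))
    simpa using h2
  have t2 : Tendsto (fun ε : ℝ => Rpoly N a b ((x:ℂ) + ε * Complex.I))
      (nhdsWithin 0 (Ioi 0)) (nhds (Rpoly N a b (x:ℂ))) := (hc.tendsto _).comp hmap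
  have t1 : Tendsto (fun ε : ℝ => (Rhalf ((x:ℂ) + ε * Complex.I)) ^ 2)
      (nhdsWithin 0 (Ioi 0)) (nhds ((Rplus x) ^ 2)) := hlim.pow 2
  have t1' : Tendsto (fun ε : ℝ => (Rhalf ((x:ℂ) + ε * Complex.I)) ^ 2)
      (nhdsWithin 0 (Ioi 0)) (nhds (Rpoly N a b (x:ℂ))) := by
    apply t2.congr'
    filter_upwards [eventually_mem_nhdsWithin] with ε hε
    exact (hsq_eps ε hε).symm
  have huniq : (Rplus x) ^ 2 = Rpoly N a b (x:ℂ) := tendsto_nhds_unique t1 t1'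
  rw [Rpoly_ofReal] at huniq
  exact sq_imag huniq (Rre_neg_band hband hgap hiN hx)

end Chain

set_option maxHeartbeats 1000000 in
/-- The matrix `A` has real entries, is invertible, and the Szegő linear system has a real
solution. -/
theorem szego_system_real_invertible
    (N : ℕ) (hN : 1 ≤ N) (a b : ℕ → ℝ)
    (hband : ∀ j ≤ N, b j < a (j + 1))
    (hgap : ∀ j, 1 ≤ j → j ≤ N → a j < b j)
    (Rhalf : ℂ → ℂ)
    (hRan : ∀ z : ℂ, ¬(z.im = 0 ∧ ∃ j ≤ N, b j ≤ z.re ∧ z.re ≤ a (j + 1)) →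
      AnalyticAt ℂ Rhalf z)
    (hRsq : ∀ z : ℂ, ¬(z.im = 0 ∧ ∃ j ≤ N, b j ≤ z.re ∧ z.re ≤ a (j + 1)) →
      (Rhalf z) ^ 2 = Rpoly N a b z)
    (hRinf : Tendsto (fun z : ℂ => Rhalf z / z ^ (N + 1)) (cocompact ℂ) (nhds 1))
    (Rplus : ℝ → ℂ)
    (hRplus : ∀ x : ℝ, (∃ j ≤ N, b j < x ∧ x < a (j + 1)) →
      Tendsto (fun ε : ℝ => Rhalf ((x : ℂ) + ε * Complex.I))
        (nhdsWithin 0 (Ioi 0)) (nhds (Rplus x)))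
    (α : ℝ)
    (A : Matrix (Fin N) (Fin N) ℂ)
    (hA : ∀ k j : Fin N, A k j =
      ∫ x in (a ((j : ℕ) + 1))..(b ((j : ℕ) + 1)), ((x : ℂ) ^ (k : ℕ) / Rhalf (x : ℂ))) :
    (∀ k j : Fin N, (A k j).im = 0) ∧
    IsUnit A ∧
    (∀ ξ : Fin N → ℂ,
      (∀ k : Fin N, ∑ j : Fin N, A k j * ξ j =
        -(1 / (2 * (Real.pi : ℂ) * Complex.I)) *
          ∑ i ∈ Finset.range (N + 1),
            ∫ x in (b i)..(a (i + 1)),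
              (2 * (α : ℂ) * (Real.log |x| : ℂ) * (x : ℂ) ^ (k : ℕ) / Rplus x)) →
      ∀ j : Fin N, (ξ j).im = 0) := by
  classical
  have gm := fun j : Fin N => gap_main hband hgap Rhalf hRan hRsq
    (j := (j:ℕ) + 1) (by omega) (Nat.succ_le_of_lt j.isLt)
  have hordj : ∀ j : Fin N, a ((j:ℕ) + 1) < b ((j:ℕ) + 1) :=
    fun j => hgap _ (by omega) (Nat.succ_le_of_lt j.isLt)
  -- Part (i)
  have hAim : ∀ k j : Fin N, (A k j).im = 0 := by
    intro k j
    rw [hA k j]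
    have h0 := clm_integral_zero Complex.imCLM (hordj j).le
      (f := fun x : ℝ => (x:ℂ)^(k:ℕ) / Rhalf (x:ℂ)) ?_
    · simpa using h0
    · intro x hx
      have hr := ((gm j).1 x hx).1
      simp only [Complex.imCLM_apply]
      rw [hr, ← Complex.ofReal_pow, ← Complex.ofReal_div]
      exact Complex.ofReal_im _
  -- Part (ii)
  have hUnit : IsUnit A := by
    set Ar : Matrix (Fin N) (Fin N) ℝ := Matrix.of fun k j => (A k j).re with hAr_def
    have hAe : ∀ k j : Fin N, A k j = ((Ar k j : ℝ) : ℂ) := by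
      intro k j
      apply Complex.ext
      · simp [hAr_def]
      · simp [hAr_def, hAim k j]
    -- real-valued integral representation of `Ar`
    have hAr_int : ∀ (k j : Fin N),
        Ar k j = ∫ x in (a ((j:ℕ)+1))..(b ((j:ℕ)+1)), (x ^ (k:ℕ) / (Rhalf (x:ℂ)).re) := by
      intro k j
      have hint := (gm j).2.2 (k:ℕ)
      have h1 : Ar k j = Complex.reCLM (A k j) := rfl
      rw [h1, hA k j, ← Complex.reCLM.intervalIntegral_comp_comm hint]
      apply integral_congr_ioo (hordj j).le
      intro x hx
      have hr := ((gm j).1 x hx).1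
      simp only [Complex.reCLM_apply]
      rw [hr, ← Complex.ofReal_pow, ← Complex.ofReal_div]
      exact Complex.ofReal_re _
    have hgk : ∀ (j : Fin N) (k : ℕ),
        IntervalIntegrable (fun x : ℝ => x ^ k / (Rhalf (x:ℂ)).re) volume
          (a ((j:ℕ)+1)) (b ((j:ℕ)+1)) := by
      intro j k
      apply intervalIntegrable_congr_ioo (hordj j).le
        (f := fun x : ℝ => ((x:ℂ)^k / Rhalf (x:ℂ)).re)
      · intro x hx
        have hr := ((gm j).1 x hx).1
        rw [hr, ← Complex.ofReal_pow, ← Complex.ofReal_div]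
        exact Complex.ofReal_re _
      · exact intervalIntegrable_re ((gm j).2.2 k)
    have hdetAr : Ar.det ≠ 0 := by
      intro hdet0
      have hdetT : (Ar.transpose).det = 0 := by rw [Matrix.det_transpose]; exact hdet0
      obtain ⟨c, hc0, hcv⟩ := (Matrix.exists_mulVec_eq_zero_iff).mpr hdetT
      -- the linear system satisfied by c
      have hsys : ∀ j : Fin N, ∑ k : Fin N, c k * Ar k j = 0 := by
        intro j
        have := congrFun hcv j
        simpa [Matrix.mulVec, dotProduct, Matrix.transpose_apply, mul_comm] using this
      -- integral of P/h over each gap vanishes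
      have hPint : ∀ j : Fin N,
          IntervalIntegrable (fun x : ℝ => (∑ k : Fin N, c k * x ^ (k:ℕ)) / (Rhalf (x:ℂ)).re)
            volume (a ((j:ℕ)+1)) (b ((j:ℕ)+1)) := by
        intro j
        have he : (fun x : ℝ => (∑ k : Fin N, c k * x ^ (k:ℕ)) / (Rhalf (x:ℂ)).re)
            = fun x : ℝ => ∑ k : Fin N, c k * (x ^ (k:ℕ) / (Rhalf (x:ℂ)).re) := by
          funext x
          rw [Finset.sum_div]
          exact Finset.sum_congr rfl (fun k _ => mul_div_assoc _ _ _)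
        rw [he]
        have hs := IntervalIntegrable.sum (μ := volume) (a := a ((j:ℕ)+1)) (b := b ((j:ℕ)+1))
          (f := fun (k : Fin N) => fun x : ℝ => c k * (x ^ (k:ℕ) / (Rhalf (x:ℂ)).re))
          Finset.univ (fun k _ => (hgk j (k:ℕ)).const_mul (c k))
        have he2 : (∑ k : Fin N, fun x : ℝ => c k * (x ^ (k:ℕ) / (Rhalf (x:ℂ)).re))
            = fun x : ℝ => ∑ k : Fin N, c k * (x ^ (k:ℕ) / (Rhalf (x:ℂ)).re) := by
          funext x
          simp
        rwa [he2] at hs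
      have hPzero : ∀ j : Fin N,
          ∫ x in (a ((j:ℕ)+1))..(b ((j:ℕ)+1)),
            ((∑ k : Fin N, c k * x ^ (k:ℕ)) / (Rhalf (x:ℂ)).re) = 0 := by
        intro j
        have he : (fun x : ℝ => (∑ k : Fin N, c k * x ^ (k:ℕ)) / (Rhalf (x:ℂ)).re)
            = fun x : ℝ => ∑ k : Fin N, c k * (x ^ (k:ℕ) / (Rhalf (x:ℂ)).re) := by
          funext x
          rw [Finset.sum_div]
          exact Finset.sum_congr rfl (fun k _ => mul_div_assoc _ _ _)
        rw [he, intervalIntegral.integral_finset_sum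
          (f := fun (k : Fin N) (x : ℝ) => c k * (x ^ (k:ℕ) / (Rhalf (x:ℂ)).re))
          (fun k _ => (hgk j (k:ℕ)).const_mul (c k))]
        have : ∀ k : Fin N,
            (∫ x in (a ((j:ℕ)+1))..(b ((j:ℕ)+1)), c k * (x ^ (k:ℕ) / (Rhalf (x:ℂ)).re))
              = c k * Ar k j := by
          intro k
          rw [intervalIntegral.integral_const_mul, ← hAr_int k j]
        rw [Finset.sum_congr rfl (fun k _ => this k)]
        exact hsys j
      -- each gap contains a root of P
      have hroot : ∀ j : Fin N, ∃ x ∈ Ioo (a ((j:ℕ)+1)) (b ((j:ℕ)+1)),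
          (∑ k : Fin N, c k * x ^ (k:ℕ)) = 0 := by
        intro j
        by_contra hcon
        push_neg at hcon
        set F : ℝ → ℝ := fun x => (∑ k : Fin N, c k * x ^ (k:ℕ)) / (Rhalf (x:ℂ)).re with hF_def
        have hFcont : ContinuousOn F (Ioo (a ((j:ℕ)+1)) (b ((j:ℕ)+1))) := by
          apply ContinuousOn.div
          · exact (continuous_finset_sum _ (fun k _ => by fun_prop)).continuousOn
          · exact Complex.continuous_re.comp_continuousOn (gm j).2.1
          · exact fun x hx => ((gm j).1 x hx).2
        have hFne : ∀ x ∈ Ioo (a ((j:ℕ)+1)) (b ((j:ℕ)+1)), F x ≠ 0 :=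
          fun x hx => div_ne_zero (hcon x hx) (((gm j).1 x hx).2)
        have hmid : (a ((j:ℕ)+1) + b ((j:ℕ)+1)) / 2 ∈ Ioo (a ((j:ℕ)+1)) (b ((j:ℕ)+1)) := by
          constructor <;> (have := hordj j; linarith)
        rcases (hFne _ hmid).lt_or_gt with hneg | hpos
        · have hall : ∀ x ∈ Ioo (a ((j:ℕ)+1)) (b ((j:ℕ)+1)), 0 < -F x := by
            intro x hx
            exact sign_const ordConnected_Ioo hFcont.neg
              (fun y hy => neg_ne_zero.mpr (hFne y hy)) hmid hx (by simp only [Pi.neg_apply]; linarith)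
          have hposint := intervalIntegral.intervalIntegral_pos_of_pos_on
            (f := fun x => -F x) ((hPint j).neg) hall (hordj j)
          rw [intervalIntegral.integral_neg, hPzero j] at hposint
          simp at hposint
        · have hall : ∀ x ∈ Ioo (a ((j:ℕ)+1)) (b ((j:ℕ)+1)), 0 < F x := by
            intro x hx
            exact sign_const ordConnected_Ioo hFcont hFne hmid hx hpos
          have hposint := intervalIntegral.intervalIntegral_pos_of_pos_on
            (hPint j) hall (hordj j)
          rw [hPzero j] at hposint
          simp at hposint
      choose xr hxr hxz using hroot
      -- the roots are distinct
      have hmono : ∀ {u v : Fin N}, u < v → xr u < xr v := by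
        intro u v huv
        have h1 : xr u < b ((u:ℕ)+1) := (hxr u).2
        have h2 : b ((u:ℕ)+1) < a ((u:ℕ)+2) := hband _ (Nat.succ_le_of_lt u.isLt)
        have h3 : a ((u:ℕ)+2) ≤ a ((v:ℕ)+1) := chain_a_le hband hgap (by omega)
          (by omega) (by omega)
        have h4 : a ((v:ℕ)+1) < xr v := (hxr v).1
        linarith
      have hinj : Function.Injective xr := by
        intro u v huv
        by_contra hne
        rcases Ne.lt_or_gt hne with h | h
        · exact absurd huv (ne_of_lt (hmono h))
        · exact absurd huv.symm (ne_of_lt (hmono h))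
      -- the polynomial P vanishes
      set p : Polynomial ℝ := ∑ k : Fin N, Polynomial.C (c k) * Polynomial.X ^ (k:ℕ) with hp_def
      have heval : ∀ j : Fin N, p.eval (xr j) = 0 := by
        intro j
        have := hxz j
        rw [hp_def]
        simpa [Polynomial.eval_finset_sum] using this
      have hdeg : p.natDegree < Fintype.card (Fin N) := by
        rw [Fintype.card_fin]
        have hle : p.natDegree ≤ N - 1 := by
          apply Polynomial.natDegree_sum_le_of_forall_le
          intro k _
          refine le_trans (Polynomial.natDegree_C_mul_le _ _) ?_
          rw [Polynomial.natDegree_X_pow]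
          omega
        omega
      have hp0 : p = 0 :=
        Polynomial.eq_zero_of_natDegree_lt_card_of_eval_eq_zero p hinj heval hdeg
      obtain ⟨k0, hk0⟩ := Function.ne_iff.mp hc0
      apply hk0
      have h1 : p.coeff (k0:ℕ) = c k0 := by rw [hp_def]; exact poly_coeff N c k0
      rw [hp0, Polynomial.coeff_zero] at h1
      exact h1.symm
    -- conclude invertibility
    have hAmap : A = (Complex.ofRealHom).mapMatrix Ar := by
      ext k j
      rw [RingHom.mapMatrix_apply, Matrix.map_apply]
      exact hAe k j
    have hdetA : IsUnit A.det := by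
      have h1 : A.det = Complex.ofRealHom Ar.det := by
        rw [hAmap, ← RingHom.map_det]
      rw [h1]
      apply isUnit_iff_ne_zero.mpr
      simpa using hdetAr
    exact (Matrix.isUnit_iff_isUnit_det A).mpr hdetA
  refine ⟨hAim, hUnit, ?_⟩
  -- Part (iii)
  · intro ξ hξ j
    set r : Fin N → ℂ := fun k =>
      -(1 / (2 * (Real.pi : ℂ) * Complex.I)) *
        ∑ i ∈ Finset.range (N + 1),
          ∫ x in (b i)..(a (i + 1)),
            (2 * (α : ℂ) * (Real.log |x| : ℂ) * (x : ℂ) ^ (k : ℕ) / Rplus x) with hr_def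
    have hrim : ∀ k : Fin N, (r k).im = 0 := by
      intro k
      have hSre : (∑ i ∈ Finset.range (N + 1),
          ∫ x in (b i)..(a (i + 1)),
            (2 * (α : ℂ) * (Real.log |x| : ℂ) * (x : ℂ) ^ (k : ℕ) / Rplus x)).re = 0 := by
        rw [Complex.re_sum]
        apply Finset.sum_eq_zero
        intro i hi
        have hiN : i ≤ N := by simpa [Nat.lt_succ_iff] using hi
        have h0 := clm_integral_zero Complex.reCLM (hband i hiN).le
          (f := fun x : ℝ =>
            2 * (α : ℂ) * (Real.log |x| : ℂ) * (x : ℂ) ^ (k : ℕ) / Rplus x) ?_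
        · simpa using h0
        · intro x hx
          have hpre : (Rplus x).re = 0 := band_re_zero hband hgap Rhalf Rplus hRsq hRplus hiN hx
          have hqim : (2 * (α : ℂ) * (Real.log |x| : ℂ) * (x : ℂ) ^ (k : ℕ)).im = 0 := by
            have he : 2 * (α : ℂ) * (Real.log |x| : ℂ) * (x : ℂ) ^ (k : ℕ)
                = ((2 * α * Real.log |x| * x ^ (k:ℕ) : ℝ) : ℂ) := by push_cast; ring
            rw [he]
            exact Complex.ofReal_im _
          simp only [Complex.reCLM_apply, Complex.div_re, hpre, hqim]
          ring
      rw [hr_def]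
      simp only [Complex.mul_im]
      have hcre : (-(1 / (2 * (Real.pi : ℂ) * Complex.I))).re = 0 := by
        simp [Complex.div_re]
      rw [hcre, hSre]
      ring
    -- conjugate the linear system
    have hAconj : ∀ k j' : Fin N, (starRingEnd ℂ) (A k j') = A k j' :=
      fun k j' => Complex.conj_eq_iff_im.mpr (hAim k j')
    have hrconj : ∀ k : Fin N, (starRingEnd ℂ) (r k) = r k :=
      fun k => Complex.conj_eq_iff_im.mpr (hrim k)
    have hξ' : ∀ k : Fin N, ∑ j' : Fin N, A k j' * ξ j' = r k := hξ
    have hsys2 : ∀ k : Fin N, ∑ j' : Fin N, A k j' * (starRingEnd ℂ) (ξ j') = r k := by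
      intro k
      calc ∑ j' : Fin N, A k j' * (starRingEnd ℂ) (ξ j')
          = (starRingEnd ℂ) (∑ j' : Fin N, A k j' * ξ j') := by
            rw [map_sum]
            exact Finset.sum_congr rfl (fun j' _ => by rw [map_mul, hAconj])
        _ = (starRingEnd ℂ) (r k) := by rw [hξ' k]
        _ = r k := hrconj k
    have hker : ∀ k : Fin N, ∑ j' : Fin N, A k j' * (ξ j' - (starRingEnd ℂ) (ξ j')) = 0 := by
      intro k
      simp only [mul_sub, Finset.sum_sub_distrib]
      rw [hξ' k, hsys2 k]
      ring
    have hmv : A.mulVec (fun j' => ξ j' - (starRingEnd ℂ) (ξ j')) = 0 := by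
      funext k
      simpa [Matrix.mulVec, dotProduct] using hker k
    obtain ⟨u, hu⟩ := hUnit
    have hzero : (fun j' => ξ j' - (starRingEnd ℂ) (ξ j')) = 0 := by
      have h1 : ((↑u⁻¹ : Matrix (Fin N) (Fin N) ℂ) * A).mulVec
          (fun j' => ξ j' - (starRingEnd ℂ) (ξ j')) = 0 := by
        rw [← Matrix.mulVec_mulVec, hmv, Matrix.mulVec_zero]
      have h2 : ((↑u⁻¹ : Matrix (Fin N) (Fin N) ℂ) * A) = 1 := by
        rw [← hu]
        exact u.inv_mul
      rw [h2, Matrix.one_mulVec] at h1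
      exact h1
    have := congrFun hzero j
    have hsub : ξ j - (starRingEnd ℂ) (ξ j) = 0 := this
    have : (starRingEnd ℂ) (ξ j) = ξ j := by
      have := sub_eq_zero.mp hsub
      exact this.symm
    exact Complex.conj_eq_iff_im.mp this
end

section
/- Let μ be a probability measure on ℝ that is absolutely continuous with respect to Lebesgue measure, with compact support contained in (−∞, a]. Define g(z) = ∫ log(z − s) dμ(s) for z ∈ ℂ∖(−∞, a], using the principal branch of the logarithm. Then for every x < a, lim_{ε→0+} ( g(x + iε) − g(x − iε) ) = 2πi · μ((x, ∞)). In particular, the jump g_+ − g_− equals 2πi for x to the left of the support, is a purely imaginary constant 2πi·μ((b, ∞)) on any interval (a', b') disjoint from the support with b' ≤ a, and is 0 for x to the right of the support (and less than a). -/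
open MeasureTheory Filter Set

private lemma log_integrable (μ : Measure ℝ) [IsProbabilityMeasure μ]
    {c aR : ℝ} (hc : μ ((Icc c aR)ᶜ) = 0) (x : ℝ) {ε : ℝ} (hε : ε ≠ 0) :
    Integrable (fun s : ℝ => Complex.log ((x : ℂ) + ε * Complex.I - (s : ℂ))) μ := by
  have hmeas : AEStronglyMeasurable
      (fun s : ℝ => Complex.log ((x : ℂ) + ε * Complex.I - (s : ℂ))) μ := by
    exact (Complex.measurable_log.comp
      ((measurable_const.sub Complex.measurable_ofReal))).aestronglyMeasurable
  set M : ℝ := abs x + abs c + abs aR + abs ε with hM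
  have hMpos : 0 < M := by
    have h1 := abs_pos.mpr hε
    have h2 := abs_nonneg x
    have h3 := abs_nonneg c
    have h4 := abs_nonneg aR
    rw [hM]; linarith
  refine Integrable.mono' (integrable_const (abs (Real.log (abs ε)) + abs (Real.log M) + Real.pi)) hmeas ?_
  have hae : ∀ᵐ s ∂μ, s ∈ Icc c aR := by
    rw [ae_iff]
    simpa only [Set.compl_def, Set.mem_setOf_eq] using hc
  filter_upwards [hae] with s hs
  set z : ℂ := (x : ℂ) + ε * Complex.I - (s : ℂ) with hz
  have him : z.im = ε := by simp [hz]
  have hzabs_lb : abs ε ≤ ‖z‖ := by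
    rw [← him]; exact Complex.abs_im_le_norm z
  have hzabs_ub : ‖z‖ ≤ M := by
    have h1 : ‖z‖ ≤ |z.re| + |z.im| := Complex.norm_le_abs_re_add_abs_im z
    have hre : z.re = x - s := by simp [hz]
    have hsb : |s| ≤ |c| + |aR| := by
      rcases hs with ⟨h1, h2⟩
      rcases abs_cases s with ⟨he, _⟩ | ⟨he, _⟩ <;> rcases abs_cases c with ⟨hc1, _⟩ | ⟨hc1, _⟩ <;>
        rcases abs_cases aR with ⟨ha1, _⟩ | ⟨ha1, _⟩ <;> nlinarith
    have : |z.re| ≤ |x| + |s| := by rw [hre]; exact abs_sub x s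
    rw [him] at h1
    rw [hM]; linarith
  have habspos : 0 < ‖z‖ := lt_of_lt_of_le (abs_pos.mpr hε) hzabs_lb
  have hnorm : ‖Complex.log z‖ ≤ |Real.log (‖z‖)| + Real.pi := by
    calc ‖Complex.log z‖ = ‖Complex.log z‖ := rfl
      _ ≤ |(Complex.log z).re| + |(Complex.log z).im| :=
          Complex.norm_le_abs_re_add_abs_im _
      _ ≤ |Real.log (‖z‖)| + Real.pi := by
          rw [Complex.log_re, Complex.log_im]
          exact add_le_add le_rfl (Complex.abs_arg_le_pi z)
  have hlog : |Real.log (‖z‖)| ≤ abs (Real.log (abs ε)) + abs (Real.log M) := by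
    have h1 : Real.log (abs ε) ≤ Real.log (‖z‖) :=
      Real.log_le_log (abs_pos.mpr hε) hzabs_lb
    have h2 : Real.log (‖z‖) ≤ Real.log M := Real.log_le_log habspos hzabs_ub
    rcases abs_cases (Real.log (‖z‖)) with ⟨he, _⟩ | ⟨he, _⟩ <;>
      rcases abs_cases (Real.log M) with ⟨h3, _⟩ | ⟨h3, _⟩ <;>
      rcases abs_cases (Real.log (abs ε)) with ⟨h4, _⟩ | ⟨h4, _⟩ <;> linarith
  calc ‖Complex.log z‖ ≤ |Real.log (‖z‖)| + Real.pi := hnorm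
    _ ≤ abs (Real.log (abs ε)) + abs (Real.log M) + Real.pi := by linarith

/-- Jump of the `g`-function across the real axis: for an absolutely continuous compactly
supported probability measure `μ` with support in `(−∞, a]` and
`g(z) = ∫ log(z − s) dμ(s)`, one has `g₊(x) − g₋(x) = 2πi·μ((x,∞))` for every `x < a`. -/
theorem g_function_jump
    (μ : Measure ℝ) (hprob : IsProbabilityMeasure μ)
    (hac : μ ≪ volume)
    (aR : ℝ) (hsupp : ∃ c : ℝ, μ ((Icc c aR)ᶜ) = 0) :
    ∀ x : ℝ, x < aR →
      Tendsto (fun ε : ℝ =>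
          (∫ s : ℝ, Complex.log ((x : ℂ) + ε * Complex.I - (s : ℂ)) ∂μ) -
            ∫ s : ℝ, Complex.log ((x : ℂ) - ε * Complex.I - (s : ℂ)) ∂μ)
        (nhdsWithin 0 (Ioi 0))
        (nhds (2 * (Real.pi : ℂ) * Complex.I * (((μ (Ioi x)).toReal : ℝ) : ℂ))) := by
  intro x hx
  obtain ⟨c, hc⟩ := hsupp
  set F : ℝ → ℝ → ℂ := fun ε s =>
    Complex.log ((x : ℂ) + ε * Complex.I - (s : ℂ)) -
      Complex.log ((x : ℂ) - ε * Complex.I - (s : ℂ)) with hF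
  set f : ℝ → ℂ := (Ioi x).indicator (fun _ => 2 * (Real.pi : ℂ) * Complex.I) with hf
  -- rewrite the second integrand as shifted first
  have key2 : ∀ ε : ℝ, ∀ s : ℝ,
      (x : ℂ) - ε * Complex.I - (s : ℂ) = (x : ℂ) + ((-ε : ℝ) : ℂ) * Complex.I - (s : ℂ) := by
    intro ε s; push_cast; ring
  -- conjugation identity
  have hconj : ∀ ε : ℝ, ε ≠ 0 → ∀ s : ℝ,
      Complex.log ((x : ℂ) - ε * Complex.I - (s : ℂ)) =
        (starRingEnd ℂ) (Complex.log ((x : ℂ) + ε * Complex.I - (s : ℂ))) := by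
    intro ε hε s
    have h1 : (x : ℂ) - ε * Complex.I - (s : ℂ) =
        (starRingEnd ℂ) ((x : ℂ) + ε * Complex.I - (s : ℂ)) := by
      simp [Complex.ext_iff]
    rw [h1, Complex.log_conj]
    intro h
    rw [Complex.arg_eq_pi_iff] at h
    have h2 := h.2
    simp at h2
    exact hε h2
  have hmeasF : ∀ ε : ℝ, AEStronglyMeasurable (F ε) μ := by
    intro ε
    exact ((Complex.measurable_log.comp
      (measurable_const.sub Complex.measurable_ofReal)).sub
      (Complex.measurable_log.comp
        (measurable_const.sub Complex.measurable_ofReal))).aestronglyMeasurable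
  -- the main convergence of integrals of F
  have hmain : Tendsto (fun ε : ℝ => ∫ s, F ε s ∂μ) (nhdsWithin 0 (Ioi 0)) (nhds (∫ s, f s ∂μ)) := by
    apply tendsto_integral_filter_of_dominated_convergence (fun _ => 2 * Real.pi)
    · exact Eventually.of_forall hmeasF
    · filter_upwards [self_mem_nhdsWithin] with ε (hε : ε ∈ Ioi 0)
      refine Eventually.of_forall fun s => ?_
      rw [hF]
      simp only
      rw [hconj ε (ne_of_gt hε) s, Complex.sub_conj]
      rw [Complex.log_im]
      have h1 : ‖((2 * Complex.arg ((x : ℂ) + ε * Complex.I - (s : ℂ)) : ℝ) : ℂ) * Complex.I‖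
          = |2 * Complex.arg ((x : ℂ) + ε * Complex.I - (s : ℂ))| := by
        rw [norm_mul, Complex.norm_I, mul_one, Complex.norm_real, Real.norm_eq_abs]
      rw [h1, abs_mul, abs_two]
      have := Complex.abs_arg_le_pi ((x : ℂ) + ε * Complex.I - (s : ℂ))
      linarith
    · exact integrable_const _
    · have hxne : ∀ᵐ s ∂μ, s ≠ x := by
        rw [ae_iff]
        have : {s : ℝ | ¬s ≠ x} = {x} := by ext s; simp
        rw [this]
        exact hac Real.volume_singleton
      filter_upwards [hxne] with s hs
      rcases lt_or_gt_of_ne hs with hsx | hsx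
      · -- s < x : limit 0
        have hbase : Tendsto (fun ε : ℝ => (x : ℂ) + ε * Complex.I - (s : ℂ))
            (nhdsWithin 0 (Ioi 0)) (nhds ((x : ℂ) - (s : ℂ))) := by
          have hcont : Continuous fun ε : ℝ => (x : ℂ) + (ε : ℂ) * Complex.I - (s : ℂ) :=
            (continuous_const.add (Complex.continuous_ofReal.mul continuous_const)).sub
              continuous_const
          have := (hcont.tendsto 0).mono_left
            (nhdsWithin_le_nhds : nhdsWithin (0:ℝ) (Ioi 0) ≤ nhds 0)
          simpa using this
        have hbase2 : Tendsto (fun ε : ℝ => (x : ℂ) - ε * Complex.I - (s : ℂ))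
            (nhdsWithin 0 (Ioi 0)) (nhds ((x : ℂ) - (s : ℂ))) := by
          have hcont : Continuous fun ε : ℝ => (x : ℂ) - (ε : ℂ) * Complex.I - (s : ℂ) :=
            (continuous_const.sub (Complex.continuous_ofReal.mul continuous_const)).sub
              continuous_const
          have := (hcont.tendsto 0).mono_left
            (nhdsWithin_le_nhds : nhdsWithin (0:ℝ) (Ioi 0) ≤ nhds 0)
          simpa using this
        have hslit : ((x : ℂ) - (s : ℂ)) ∈ Complex.slitPlane := by
          left
          simp only [Complex.sub_re, Complex.ofReal_re]
          linarith
        have hlog := continuousAt_clog hslit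
        have h1 := hlog.tendsto.comp hbase
        have h2 := hlog.tendsto.comp hbase2
        have h3 := h1.sub h2
        rw [sub_self] at h3
        have hfz : f s = 0 := by
          rw [hf, indicator_of_notMem]
          simp only [mem_Ioi, not_lt]
          linarith
        rw [hfz]
        exact h3
      · -- s > x : limit 2πi
        have hre : ((x : ℂ) - (s : ℂ)).re < 0 := by
          simp only [Complex.sub_re, Complex.ofReal_re]; linarith
        have him : ((x : ℂ) - (s : ℂ)).im = 0 := by simp
        have hup := Complex.tendsto_log_nhdsWithin_im_nonneg_of_re_neg_of_im_zero hre him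
        have hdown := Complex.tendsto_log_nhdsWithin_im_neg_of_re_neg_of_im_zero hre him
        have hbase : Tendsto (fun ε : ℝ => (x : ℂ) + ε * Complex.I - (s : ℂ))
            (nhdsWithin 0 (Ioi 0)) (nhdsWithin ((x : ℂ) - (s : ℂ)) {z : ℂ | 0 ≤ z.im}) := by
          rw [tendsto_nhdsWithin_iff]
          constructor
          · have hcont : Continuous fun ε : ℝ => (x : ℂ) + (ε : ℂ) * Complex.I - (s : ℂ) := by
              continuity
            have := (hcont.tendsto 0).mono_left
              (nhdsWithin_le_nhds : nhdsWithin (0:ℝ) (Ioi 0) ≤ nhds 0)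
            simpa using this
          · filter_upwards [self_mem_nhdsWithin] with ε (hε : ε ∈ Ioi 0)
            simp only [mem_setOf_eq, Complex.sub_im, Complex.add_im, Complex.ofReal_im,
              Complex.mul_im, Complex.I_im, Complex.ofReal_re, Complex.I_re]
            simp
            exact le_of_lt hε
        have hbase2 : Tendsto (fun ε : ℝ => (x : ℂ) - ε * Complex.I - (s : ℂ))
            (nhdsWithin 0 (Ioi 0)) (nhdsWithin ((x : ℂ) - (s : ℂ)) {z : ℂ | z.im < 0}) := by
          rw [tendsto_nhdsWithin_iff]
          constructor
          · have hcont : Continuous fun ε : ℝ => (x : ℂ) - (ε : ℂ) * Complex.I - (s : ℂ) := by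
              continuity
            have := (hcont.tendsto 0).mono_left
              (nhdsWithin_le_nhds : nhdsWithin (0:ℝ) (Ioi 0) ≤ nhds 0)
            simpa using this
          · filter_upwards [self_mem_nhdsWithin] with ε (hε : ε ∈ Ioi 0)
            simp only [mem_setOf_eq, Complex.sub_im, Complex.add_im, Complex.ofReal_im,
              Complex.mul_im, Complex.I_im, Complex.ofReal_re, Complex.I_re]
            simp
            exact hε
        have h1 := hup.comp hbase
        have h2 := hdown.comp hbase2
        have h3 := h1.sub h2
        have hfz : f s = 2 * (Real.pi : ℂ) * Complex.I := by
          rw [hf, indicator_of_mem]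
          exact hsx
        rw [hfz]
        have hval : ((Real.log (‖(x : ℂ) - (s : ℂ)‖) : ℂ) + Real.pi * Complex.I) -
            ((Real.log (‖(x : ℂ) - (s : ℂ)‖) : ℂ) - Real.pi * Complex.I) =
            2 * (Real.pi : ℂ) * Complex.I := by ring
        rw [hval] at h3
        exact h3
  -- rewrite integral of f
  have hfint : (∫ s, f s ∂μ) = 2 * (Real.pi : ℂ) * Complex.I * (((μ (Ioi x)).toReal : ℝ) : ℂ) := by
    rw [hf, integral_indicator_const _ measurableSet_Ioi]
    rw [Complex.real_smul]
    simp only [Measure.real]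
    ring
  rw [hfint] at hmain
  -- identify eventually the difference of integrals with the integral of the difference
  refine hmain.congr' ?_
  filter_upwards [self_mem_nhdsWithin] with ε (hε : ε ∈ Ioi 0)
  have hεne : ε ≠ 0 := ne_of_gt hε
  have hint1 := log_integrable μ hc x hεne
  have hint2 : Integrable (fun s : ℝ => Complex.log ((x : ℂ) - ε * Complex.I - (s : ℂ))) μ := by
    have := log_integrable μ hc x (neg_ne_zero.mpr hεne)
    refine this.congr (Eventually.of_forall fun s => ?_)
    exact congrArg Complex.log (key2 ε s).symm
  rw [hF]
  simp only
  rw [← integral_sub hint1 hint2]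
end

section
/- Let α > −1/2, ψ₀ > 0, δ > 0, and let f be an analytic function on {|z| < δ}, real-valued on (−δ, δ), with f(z) = πψ₀·z + O(z²) as z → 0. For u > 0 and n large enough, set ũ_n = n·f(u/(n·ψ₀)). Then J_{α+1/2}(ũ_n) = J_{α+1/2}(πu) + O(u^{α+3/2}/n) as n → ∞, uniformly for u in bounded subsets of (0,∞): for every bounded B ⊂ (0,∞) there exist C and n₀ such that |J_{α+1/2}(ũ_n) − J_{α+1/2}(πu)| ≤ C·u^{α+3/2}/n for all u ∈ B and n ≥ n₀. -/
open Filter Set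

/-- Bessel function of the first kind `J_ν(x)` (series definition). -/
noncomputable def besselJ (ν x : ℝ) : ℝ :=
  ∑' m : ℕ, ((-1 : ℝ) ^ m / (m.factorial * Real.Gamma ((m : ℝ) + ν + 1))) *
    (x / 2) ^ (2 * (m : ℝ) + ν)


lemma gamma_lb (ν : ℝ) (hν : 0 < ν) : ∀ m : ℕ,
    Real.Gamma (ν+1) * m.factorial ≤ Real.Gamma ((m:ℝ) + ν + 1) := by
  intro m
  induction m with
  | zero => simp
  | succ m ih =>
    have h1 : ((m:ℝ)+1) + ν + 1 = ((m:ℝ) + ν + 1) + 1 := by ring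
    have hpos : (0:ℝ) < (m:ℝ) + ν + 1 := by
      have : (0:ℝ) ≤ m := Nat.cast_nonneg m; linarith
    rw [Nat.factorial_succ]
    push_cast
    rw [h1, Real.Gamma_add_one (ne_of_gt hpos)]
    have hGν1 := Real.Gamma_pos_of_pos (show (0:ℝ) < ν+1 by linarith)
    have hfac : (0:ℝ) ≤ (m.factorial : ℝ) := by positivity
    calc Real.Gamma (ν+1) * (((m:ℝ)+1) * (m.factorial:ℝ))
        = ((m:ℝ)+1) * (Real.Gamma (ν+1) * (m.factorial:ℝ)) := by ring
      _ ≤ ((m:ℝ)+ν+1) * Real.Gamma ((m:ℝ)+ν+1) :=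
          mul_le_mul (by linarith) ih (by positivity) (by linarith)

lemma coeff_bound (ν : ℝ) (hν : 0 < ν) : ∀ m : ℕ,
    (1 + 2*(m:ℝ) + ν) ≤ (3+ν) * 2^m := by
  intro m
  induction m with
  | zero => norm_num
  | succ m ih =>
    have h2 : (2:ℝ) ≤ (3+ν)*2^m := by
      have : (1:ℝ) ≤ 2^m := one_le_pow₀ (by norm_num)
      nlinarith
    push_cast
    calc (1 + 2*((m:ℝ)+1) + ν) = (1+2*(m:ℝ)+ν) + 2 := by ring
      _ ≤ (3+ν)*2^m + (3+ν)*2^m := by linarith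
      _ = (3+ν)*2^(m+1) := by ring

lemma summable_master (ν Y : ℝ) (hν : 0 < ν) :
    Summable (fun m : ℕ => (1 + 2*(m:ℝ) + ν) * Y^(2*m) /
      (m.factorial * Real.Gamma ((m:ℝ)+ν+1))) := by
  have hG := Real.Gamma_pos_of_pos (show (0:ℝ) < ν + 1 by linarith)
  have hsum : Summable (fun m : ℕ => ((3+ν)/Real.Gamma (ν+1)) * ((2*Y^2)^m / m.factorial)) :=
    (Real.summable_pow_div_factorial (2*Y^2)).mul_left _
  have hmp : ∀ m : ℕ, (0:ℝ) < (m:ℝ) + ν + 1 := by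
    intro m; have : (0:ℝ) ≤ m := Nat.cast_nonneg m; linarith
  have hnn : ∀ m : ℕ, (0:ℝ) ≤ (1 + 2*(m:ℝ) + ν) * Y^(2*m) /
      (m.factorial * Real.Gamma ((m:ℝ)+ν+1)) := by
    intro m
    have h1 : (0:ℝ) < Real.Gamma ((m:ℝ)+ν+1) := Real.Gamma_pos_of_pos (hmp m)
    have h2 : (0:ℝ) ≤ Y^(2*m) := by rw [pow_mul]; positivity
    have h3 : (0:ℝ) ≤ 1 + 2*(m:ℝ) + ν := by
      have : (0:ℝ) ≤ m := Nat.cast_nonneg m; linarith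
    have h4 : (0:ℝ) < (m.factorial:ℝ) := by positivity
    positivity
  have hle : ∀ m : ℕ, (1 + 2*(m:ℝ) + ν) * Y^(2*m) / (m.factorial * Real.Gamma ((m:ℝ)+ν+1))
      ≤ ((3+ν)/Real.Gamma (ν+1)) * ((2*Y^2)^m / m.factorial) := by
    intro m
    have h1 : (0:ℝ) < Real.Gamma ((m:ℝ)+ν+1) := Real.Gamma_pos_of_pos (hmp m)
    have hfac : (1:ℝ) ≤ (m.factorial : ℝ) := by exact_mod_cast m.factorial_pos
    have hfp : (0:ℝ) < (m.factorial:ℝ) := by positivity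
    have hY : (0:ℝ) ≤ Y^(2*m) := by rw [pow_mul]; positivity
    have h3 : (0:ℝ) ≤ 1 + 2*(m:ℝ) + ν := by
      have : (0:ℝ) ≤ m := Nat.cast_nonneg m; linarith
    have key : (1 + 2*(m:ℝ) + ν) * Y^(2*m) / ((m.factorial:ℝ) * Real.Gamma ((m:ℝ)+ν+1))
        ≤ ((3+ν) * 2^m * Y^(2*m)) / (Real.Gamma (ν+1) * m.factorial) := by
      apply div_le_div₀ (by positivity)
      · exact mul_le_mul_of_nonneg_right (coeff_bound ν hν m) hY
      · positivity
      · calc Real.Gamma (ν+1) * (m.factorial:ℝ)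
            ≤ (Real.Gamma (ν+1) * (m.factorial:ℝ)) * (m.factorial:ℝ) := by
              simpa using mul_le_mul_of_nonneg_left hfac (mul_pos hG hfp).le
          _ ≤ Real.Gamma ((m:ℝ)+ν+1) * (m.factorial:ℝ) :=
              mul_le_mul_of_nonneg_right (gamma_lb ν hν m) (by positivity)
          _ = (m.factorial:ℝ) * Real.Gamma ((m:ℝ)+ν+1) := by ring
    refine key.trans (le_of_eq ?_)
    rw [pow_mul, mul_pow]
    field_simp
  exact Summable.of_nonneg_of_le hnn hle hsum

lemma rpow_split (x ν : ℝ) (hx : 0 < x) (m : ℕ) :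
    x^(2*(m:ℝ)+ν) = x^(2*m) * x^ν := by
  have h : (2*(m:ℝ)) = ((2*m:ℕ):ℝ) := by push_cast; ring
  rw [Real.rpow_add hx, h, Real.rpow_natCast]

lemma hmp' (ν : ℝ) (hν : 0 < ν) (m : ℕ) : (0:ℝ) < (m:ℝ) + ν + 1 := by
  have : (0:ℝ) ≤ m := Nat.cast_nonneg m; linarith

lemma summable_s (ν Y : ℝ) (hν : 0 < ν) :
    Summable (fun m : ℕ => (2*(m:ℝ) + ν) * Y^(2*m) /
      (m.factorial * Real.Gamma ((m:ℝ)+ν+1))) := by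
  refine Summable.of_nonneg_of_le ?_ ?_ (summable_master ν Y hν)
  · intro m
    have h1 := Real.Gamma_pos_of_pos (hmp' ν hν m)
    have h2 : (0:ℝ) ≤ Y^(2*m) := by rw [pow_mul]; positivity
    have h3 : (0:ℝ) ≤ 2*(m:ℝ) + ν := by
      have : (0:ℝ) ≤ m := Nat.cast_nonneg m; linarith
    have h4 : (0:ℝ) < (m.factorial:ℝ) := by positivity
    positivity
  · intro m
    have h1 := Real.Gamma_pos_of_pos (hmp' ν hν m)
    have h2 : (0:ℝ) ≤ Y^(2*m) := by rw [pow_mul]; positivity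
    have h4 : (0:ℝ) < (m.factorial:ℝ) := by positivity
    apply div_le_div_of_nonneg_right ?_ (by positivity) |>.trans_eq rfl
    nlinarith

lemma summable_bessel (ν x : ℝ) (hν : 0 < ν) (hx : 0 < x) :
    Summable (fun m : ℕ => ((-1:ℝ)^m / (m.factorial * Real.Gamma ((m:ℝ)+ν+1))) *
      (x/2)^(2*(m:ℝ)+ν)) := by
  rw [← summable_abs_iff]
  refine Summable.of_nonneg_of_le (fun m => abs_nonneg _) ?_
    (((summable_master ν (x/2) hν)).mul_left ((x/2)^ν))
  intro m
  have hx2 : (0:ℝ) < x/2 := by linarith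
  have h1 := Real.Gamma_pos_of_pos (hmp' ν hν m)
  have h4 : (0:ℝ) < (m.factorial:ℝ) := by positivity
  have h2 : (0:ℝ) ≤ (x/2)^(2*m) := by rw [pow_mul]; positivity
  have h3 : (0:ℝ) ≤ 1 + 2*(m:ℝ) + ν := by
    have : (0:ℝ) ≤ m := Nat.cast_nonneg m; linarith
  rw [rpow_split (x/2) ν hx2 m, abs_mul, abs_div, abs_pow, abs_neg, abs_one, one_pow]
  rw [abs_of_pos (by positivity), abs_of_nonneg (by positivity :
    (0:ℝ) ≤ (x/2)^(2*m) * (x/2)^ν)]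
  have hB : (0:ℝ) ≤ (x/2)^ν := Real.rpow_nonneg hx2.le ν
  have hmn : (0:ℝ) ≤ 2*(m:ℝ) + ν := by
    have : (0:ℝ) ≤ m := Nat.cast_nonneg m; linarith
  rw [mul_div_assoc', div_mul_eq_mul_div, one_mul]
  apply div_le_div_of_nonneg_right ?_ (by positivity) |>.trans_eq rfl
  nlinarith [mul_nonneg (mul_nonneg h2 hB) hmn]

lemma term_diff_bound (ν : ℝ) (hν : 0 < ν) (m : ℕ) (s t a b : ℝ) (hs : 0 < s)
    (ha : a ∈ Icc s t) (hb : b ∈ Icc s t) :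
    |(b/2)^(2*(m:ℝ)+ν) - (a/2)^(2*(m:ℝ)+ν)| ≤
      (2*(m:ℝ)+ν) * ((t/2)^(2*m) * ((s/2)^(ν-1) + (t/2)^(ν-1))) * (|b-a|/2) := by
  set p : ℝ := 2*(m:ℝ)+ν with hp_def
  have hmn : (0:ℝ) ≤ 2*(m:ℝ) := by positivity
  have hp : 0 < p := by simp only [hp_def]; linarith
  have hst : s ≤ t := ha.1.trans ha.2
  set E : ℝ := (s/2)^(ν-1) + (t/2)^(ν-1) with hE_def
  set C : ℝ := p * ((t/2)^(2*m) * E) / 2 with hC_def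
  have hderiv : ∀ x ∈ Icc s t, HasDerivWithinAt (fun y => (y/2)^p)
      (1/2 * p * (x/2)^(p-1)) (Icc s t) x := by
    intro x hx
    have hx0 : 0 < x := lt_of_lt_of_le hs hx.1
    have h := (((hasDerivAt_id x).div_const 2).rpow_const
      (p := p) (Or.inl (by positivity : (0:ℝ) < x/2).ne'))
    simpa using h.hasDerivWithinAt
  have hbound : ∀ x ∈ Icc s t, ‖1/2 * p * (x/2)^(p-1)‖ ≤ C := by
    intro x hx
    have hx0 : 0 < x := lt_of_lt_of_le hs hx.1
    have hx2 : (0:ℝ) < x/2 := by positivity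
    have hsplit : (x/2)^(p-1) = (x/2)^(2*m) * (x/2)^(ν-1) := by
      rw [show p - 1 = 2*(m:ℝ)+(ν-1) by simp only [hp_def]; ring]
      exact rpow_split (x/2) (ν-1) hx2 m
    have hb1 : (x/2)^(2*m) ≤ (t/2)^(2*m) := by
      apply pow_le_pow_left₀ hx2.le (by linarith [hx.2])
    have hb2 : (x/2)^(ν-1) ≤ E := by
      rcases le_or_gt 0 (ν-1) with h | h
      · have := Real.rpow_le_rpow hx2.le (by linarith [hx.2] : x/2 ≤ t/2) h
        have h0 : (0:ℝ) ≤ (s/2)^(ν-1) := Real.rpow_nonneg (by positivity) _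
        simp only [hE_def]; linarith
      · have := Real.rpow_le_rpow_of_nonpos (by positivity : (0:ℝ) < s/2)
          (by linarith [hx.1] : s/2 ≤ x/2) h.le
        have h0 : (0:ℝ) ≤ (t/2)^(ν-1) := Real.rpow_nonneg (by linarith : (0:ℝ) ≤ t/2) _
        simp only [hE_def]; linarith
    have hnn : (0:ℝ) ≤ (x/2)^(p-1) := Real.rpow_nonneg hx2.le _
    rw [Real.norm_eq_abs, abs_of_nonneg (by positivity)]
    rw [hsplit, hC_def]
    have hxnn : (0:ℝ) ≤ (x/2)^(2*m) := by positivity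
    have hEnn : (0:ℝ) ≤ (x/2)^(ν-1) := Real.rpow_nonneg hx2.le _
    have : (x/2)^(2*m) * (x/2)^(ν-1) ≤ (t/2)^(2*m) * E :=
      mul_le_mul hb1 hb2 hEnn (by rw [pow_mul]; positivity)
    nlinarith
  have mvt := Convex.norm_image_sub_le_of_norm_hasDerivWithin_le hderiv hbound
    (convex_Icc s t) ha hb
  rw [Real.norm_eq_abs, Real.norm_eq_abs] at mvt
  calc |(b/2)^p - (a/2)^p| ≤ C * |b - a| := mvt
    _ = p * ((t/2)^(2*m) * E) * (|b-a|/2) := by rw [hC_def]; ring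

lemma quad_bound (f : ℂ → ℂ) (c : ℂ)
    (hfan : AnalyticAt ℂ f 0) (hf0 : f 0 = 0) (hf' : deriv f 0 = c) :
    ∃ K r : ℝ, 0 < K ∧ 0 < r ∧ ∀ z : ℂ, ‖z‖ < r → ‖f z - c * z‖ ≤ K * ‖z‖^2 := by
  set g : ℂ → ℂ := fun z => f z - c * z with hg_def
  have hgan : AnalyticAt ℂ g 0 := hfan.sub (analyticAt_const.mul analyticAt_id)
  have hg0 : g 0 = 0 := by simp [hg_def, hf0]
  have h1 : HasDerivAt (fun z : ℂ => c * z) c 0 := by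
    simpa using (hasDerivAt_id (0:ℂ)).const_mul c
  have h2 : HasDerivAt f (deriv f 0) 0 := hfan.differentiableAt.hasDerivAt
  have h3 : HasDerivAt g 0 0 := by
    have := h2.sub h1
    rw [hf', sub_self] at this
    exact this
  have hgderiv : deriv g 0 = 0 := h3.deriv
  obtain ⟨p, hp⟩ := hgan
  have h4 := hp.has_fpower_series_dslope_fslope
  have h5 := h4.has_fpower_series_dslope_fslope
  set h : ℂ → ℂ := dslope (dslope g 0) 0 with hh_def
  have hcont : ContinuousAt h 0 := h5.continuousAt
  set K : ℝ := ‖h 0‖ + 1 with hK_def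
  obtain ⟨ε, hε, hball⟩ := Metric.continuousAt_iff.mp hcont 1 one_pos
  have hd0 : dslope g 0 0 = 0 := by rw [dslope_same]; exact hgderiv
  have key : ∀ z : ℂ, z ≠ 0 → g z = z^2 * h z := by
    intro z hz
    have e1 : dslope g 0 z = g z / z := by
      rw [dslope_of_ne g hz, slope_def_field, hg0]; simp
    have e2 : h z = dslope g 0 z / z := by
      rw [hh_def, dslope_of_ne _ hz, slope_def_field, hd0]; simp
    rw [e2, e1]
    field_simp
  refine ⟨K, ε, by positivity, hε, ?_⟩
  intro z hzr
  rcases eq_or_ne z 0 with rfl | hz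
  · simp [hf0]
  · have hgz : ‖g z‖ = ‖z‖^2 * ‖h z‖ := by
      rw [key z hz, norm_mul, norm_pow]
    have hdist : dist z 0 < ε := by rwa [dist_zero_right]
    have := hball hdist
    rw [dist_eq_norm] at this
    have hhz : ‖h z‖ ≤ K := by
      calc ‖h z‖ = ‖h 0 + (h z - h 0)‖ := by ring_nf
        _ ≤ ‖h 0‖ + ‖h z - h 0‖ := norm_add_le _ _
        _ ≤ K := by rw [hK_def]; linarith
    calc ‖f z - c * z‖ = ‖g z‖ := rfl
      _ = ‖z‖^2 * ‖h z‖ := hgz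
      _ ≤ ‖z‖^2 * K := by nlinarith [norm_nonneg z, sq_nonneg ‖z‖]
      _ = K * ‖z‖^2 := by ring

set_option maxHeartbeats 1000000 in
/-- With `ũ_n = n·f(u/(nψ₀))`, one has
`J_{α+1/2}(ũ_n) = J_{α+1/2}(πu) + O(u^{α+3/2}/n)`, uniformly for `u` in bounded subsets
of `(0,∞)`. -/
theorem besselJ_plus_asymptotics
    (α ψ₀ δ : ℝ) (hα : -1/2 < α) (hψ₀ : 0 < ψ₀) (hδ : 0 < δ)
    (f : ℂ → ℂ)
    (hfan : ∀ z ∈ Metric.ball (0 : ℂ) δ, AnalyticAt ℂ f z)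
    (hfreal : ∀ x : ℝ, x ∈ Ioo (-δ) δ → (f ((x : ℝ) : ℂ)).im = 0)
    (hf0 : f 0 = 0)
    (hf' : deriv f 0 = (Real.pi : ℂ) * (ψ₀ : ℂ)) :
    ∀ B : Set ℝ, B ⊆ Ioi 0 → Bornology.IsBounded B →
      ∃ C : ℝ, ∃ n₀ : ℕ, ∀ u ∈ B, ∀ n : ℕ, n₀ ≤ n →
        |besselJ (α + 1/2) ((n : ℝ) * (f (((u / ((n : ℝ) * ψ₀)) : ℝ) : ℂ)).re) -
          besselJ (α + 1/2) (Real.pi * u)| ≤ C * u ^ (α + 3/2) / n := by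
  intro B hB1 hB2
  set ν : ℝ := α + 1/2 with hν_def
  have hν : 0 < ν := by rw [hν_def]; linarith
  have hπ := Real.pi_pos
  -- bound for B
  obtain ⟨R₀, hR₀⟩ := hB2.subset_closedBall 0
  set R : ℝ := max R₀ 1 with hR_def
  have hR1 : (1:ℝ) ≤ R := le_max_right _ _
  have hR : (0:ℝ) < R := lt_of_lt_of_le one_pos hR1
  have huR : ∀ u ∈ B, u ≤ R := by
    intro u hu
    have := hR₀ hu
    rw [Metric.mem_closedBall, dist_zero_right, Real.norm_eq_abs] at this
    exact (le_abs_self u).trans (this.trans (le_max_left _ _))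
  -- quadratic bound for f
  obtain ⟨K, r, hK, hr, hKr⟩ := quad_bound f ((Real.pi : ℂ) * (ψ₀ : ℂ))
    (hfan 0 (Metric.mem_ball_self hδ)) hf0 hf'
  -- constants
  set D : ℝ := (Real.pi/4)^(ν-1) + (3*Real.pi/4)^(ν-1) with hD_def
  have hD : 0 ≤ D := by
    rw [hD_def]
    have := Real.rpow_nonneg (show (0:ℝ) ≤ Real.pi/4 by positivity) (ν-1)
    have := Real.rpow_nonneg (show (0:ℝ) ≤ 3*Real.pi/4 by positivity) (ν-1)
    linarith
  set S : ℝ := ∑' m : ℕ, (2*(m:ℝ) + ν) * (Real.pi*R)^(2*m) /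
      (m.factorial * Real.Gamma ((m:ℝ)+ν+1)) with hS_def
  have hSsum := summable_s ν (Real.pi*R) hν
  have hSnn : 0 ≤ S := by
    rw [hS_def]
    apply tsum_nonneg
    intro m
    have h1 := Real.Gamma_pos_of_pos (hmp' ν hν m)
    have h2 : (0:ℝ) ≤ (Real.pi*R)^(2*m) := by rw [pow_mul]; positivity
    have h3 : (0:ℝ) ≤ 2*(m:ℝ) + ν := by
      have : (0:ℝ) ≤ m := Nat.cast_nonneg m; linarith
    have h4 : (0:ℝ) < (m.factorial:ℝ) := by positivity
    positivity
  obtain ⟨n₀', hn₀'⟩ := exists_nat_ge (max (R/(ψ₀*r)) (2*K*R/(Real.pi*ψ₀^2)))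
  refine ⟨D*S*K/(2*ψ₀^2), n₀' + 1, ?_⟩
  intro u huB n hn
  have hu : 0 < u := hB1 huB
  have huR' : u ≤ R := huR u huB
  have hnn : (n₀':ℝ) + 1 ≤ (n:ℝ) := by exact_mod_cast hn
  have hnA : max (R/(ψ₀*r)) (2*K*R/(Real.pi*ψ₀^2)) + 1 ≤ (n:ℝ) := by linarith
  have hn1 : (1:ℝ) ≤ (n:ℝ) := by
    have h0 : (0:ℝ) ≤ max (R/(ψ₀*r)) (2*K*R/(Real.pi*ψ₀^2)) := by positivity
    linarith
  have hnpos : (0:ℝ) < (n:ℝ) := by linarith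
  set t : ℝ := u / ((n:ℝ) * ψ₀) with ht_def
  have ht : 0 < t := by rw [ht_def]; positivity
  have htr : t < r := by
    have hA1 : R/(ψ₀*r) < (n:ℝ) := by
      have := le_max_left (R/(ψ₀*r)) (2*K*R/(Real.pi*ψ₀^2)); linarith
    rw [div_lt_iff₀ (by positivity)] at hA1
    rw [ht_def, div_lt_iff₀ (by positivity)]
    nlinarith
  -- the quadratic bound at t
  have hnormt : ‖((t:ℝ):ℂ)‖ < r := by rwa [Complex.norm_real, Real.norm_eq_abs, abs_of_pos ht]
  have hq := hKr _ hnormt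
  rw [Complex.norm_real, Real.norm_eq_abs, abs_of_pos ht] at hq
  set b : ℝ := (n:ℝ) * (f ((t:ℝ):ℂ)).re with hb_def
  set a : ℝ := Real.pi * u with ha_def
  have ha_pos : 0 < a := by rw [ha_def]; positivity
  -- difference bound
  have hre : (f ((t:ℝ):ℂ)).re = Real.pi*ψ₀*t + (f ((t:ℝ):ℂ) - (Real.pi:ℂ)*(ψ₀:ℂ)*((t:ℝ):ℂ)).re := by
    rw [Complex.sub_re]
    have : ((Real.pi:ℂ)*(ψ₀:ℂ)*((t:ℝ):ℂ)).re = Real.pi*ψ₀*t := by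
      have : (Real.pi:ℂ)*(ψ₀:ℂ)*((t:ℝ):ℂ) = (((Real.pi*ψ₀*t : ℝ)):ℂ) := by push_cast; ring
      rw [this, Complex.ofReal_re]
    rw [this]; ring
  have hna : (n:ℝ) * (Real.pi*ψ₀*t) = a := by
    rw [ht_def, ha_def]; field_simp
  have hdiff : |b - a| ≤ K*u^2/(ψ₀^2*(n:ℝ)) := by
    have e1 : b - a = (n:ℝ) * (f ((t:ℝ):ℂ) - (Real.pi:ℂ)*(ψ₀:ℂ)*((t:ℝ):ℂ)).re := by
      rw [hb_def, hre, mul_add, hna]; ring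
    rw [e1, abs_mul, abs_of_pos hnpos]
    have h2 : |(f ((t:ℝ):ℂ) - (Real.pi:ℂ)*(ψ₀:ℂ)*((t:ℝ):ℂ)).re| ≤ K * t^2 := by
      refine (Complex.abs_re_le_norm _).trans ?_
      have :  |t|^2 = t^2 := sq_abs t
      calc ‖_‖ ≤ K * |t|^2 := by simpa [sq_abs] using hq
        _ = K * t^2 := by rw [this]
    calc (n:ℝ) * |(f ((t:ℝ):ℂ) - (Real.pi:ℂ)*(ψ₀:ℂ)*((t:ℝ):ℂ)).re|
        ≤ (n:ℝ) * (K * t^2) := mul_le_mul_of_nonneg_left h2 hnpos.le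
      _ = K*u^2/(ψ₀^2*(n:ℝ)) := by rw [ht_def]; field_simp
  have hclose : |b - a| ≤ a/2 := by
    refine hdiff.trans ?_
    rw [ha_def]
    have hA2 : 2*K*R/(Real.pi*ψ₀^2) ≤ (n:ℝ) := by
      have := le_max_right (R/(ψ₀*r)) (2*K*R/(Real.pi*ψ₀^2)); linarith
    rw [div_le_iff₀ (by positivity)] at hA2
    rw [div_le_div_iff₀ (by positivity) (by norm_num)]
    have h1 : 2*K*R*u ≤ (n:ℝ)*(Real.pi*ψ₀^2)*u := mul_le_mul_of_nonneg_right hA2 hu.le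
    have h2 : K*u*u ≤ K*R*u :=
      mul_le_mul_of_nonneg_right (mul_le_mul_of_nonneg_left huR' hK.le) hu.le
    nlinarith [h1, h2]
  have hbmem : b ∈ Icc (a/2) (3*a/2) := by
    obtain ⟨h1, h2⟩ := abs_le.mp hclose
    constructor <;> linarith
  have hamem : a ∈ Icc (a/2) (3*a/2) := by constructor <;> linarith
  have hb_pos : 0 < b := lt_of_lt_of_le (by linarith) hbmem.1
  -- summability
  have hsa := summable_bessel ν a hν ha_pos
  have hsb := summable_bessel ν b hν hb_pos
  -- termwise bound
  set bound : ℕ → ℝ := fun m => (D * u^(ν-1) * (|b-a|/2)) *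
    ((2*(m:ℝ) + ν) * (Real.pi*R)^(2*m) / (m.factorial * Real.Gamma ((m:ℝ)+ν+1))) with hbound_def
  have hdm_le : ∀ m : ℕ, |((-1:ℝ)^m / (m.factorial * Real.Gamma ((m:ℝ)+ν+1))) * (b/2)^(2*(m:ℝ)+ν)
      - ((-1:ℝ)^m / (m.factorial * Real.Gamma ((m:ℝ)+ν+1))) * (a/2)^(2*(m:ℝ)+ν)| ≤ bound m := by
    intro m
    have hG := Real.Gamma_pos_of_pos (hmp' ν hν m)
    have hfp : (0:ℝ) < (m.factorial:ℝ) := by positivity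
    have hpnn : (0:ℝ) ≤ 2*(m:ℝ)+ν := by
      have : (0:ℝ) ≤ m := Nat.cast_nonneg m; linarith
    have htdb := term_diff_bound ν hν m (a/2) (3*a/2) a b (by linarith) hamem hbmem
    have hE : (a/2/2)^(ν-1) + (3*a/2/2)^(ν-1) = D * u^(ν-1) := by
      rw [show a/2/2 = (Real.pi/4)*u by rw [ha_def]; ring,
          show 3*a/2/2 = (3*Real.pi/4)*u by rw [ha_def]; ring,
          Real.mul_rpow (by positivity) hu.le, Real.mul_rpow (by positivity) hu.le,
          hD_def]
      ring
    have hpow : (3*a/2/2)^(2*m) ≤ (Real.pi*R)^(2*m) := by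
      apply pow_le_pow_left₀ (by rw [ha_def]; positivity)
      rw [ha_def]; nlinarith
    have hEnn : (0:ℝ) ≤ D * u^(ν-1) := mul_nonneg hD (Real.rpow_nonneg hu.le _)
    have step1 : |(b/2)^(2*(m:ℝ)+ν) - (a/2)^(2*(m:ℝ)+ν)| ≤
        (2*(m:ℝ)+ν) * ((Real.pi*R)^(2*m) * (D * u^(ν-1))) * (|b-a|/2) := by
      refine htdb.trans ?_
      rw [hE]
      apply mul_le_mul_of_nonneg_right ?_ (by positivity)
      exact mul_le_mul_of_nonneg_left (mul_le_mul_of_nonneg_right hpow hEnn) hpnn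
    calc |((-1:ℝ)^m / (m.factorial * Real.Gamma ((m:ℝ)+ν+1))) * (b/2)^(2*(m:ℝ)+ν)
          - ((-1:ℝ)^m / (m.factorial * Real.Gamma ((m:ℝ)+ν+1))) * (a/2)^(2*(m:ℝ)+ν)|
        = (1 / ((m.factorial:ℝ) * Real.Gamma ((m:ℝ)+ν+1))) *
            |(b/2)^(2*(m:ℝ)+ν) - (a/2)^(2*(m:ℝ)+ν)| := by
          rw [← mul_sub, abs_mul, abs_div, abs_pow, abs_neg, abs_one, one_pow,
            abs_of_pos (by positivity)]
      _ ≤ (1 / ((m.factorial:ℝ) * Real.Gamma ((m:ℝ)+ν+1))) *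
            ((2*(m:ℝ)+ν) * ((Real.pi*R)^(2*m) * (D * u^(ν-1))) * (|b-a|/2)) :=
          mul_le_mul_of_nonneg_left step1 (by positivity)
      _ = bound m := by rw [hbound_def]; field_simp
  have hboundsum : Summable bound := hSsum.mul_left _
  have habs_sum : Summable (fun m : ℕ =>
      |((-1:ℝ)^m / (m.factorial * Real.Gamma ((m:ℝ)+ν+1))) * (b/2)^(2*(m:ℝ)+ν)
       - ((-1:ℝ)^m / (m.factorial * Real.Gamma ((m:ℝ)+ν+1))) * (a/2)^(2*(m:ℝ)+ν)|) :=
    Summable.of_nonneg_of_le (fun m => abs_nonneg _) hdm_le hboundsum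
  -- main estimate
  have hJ : besselJ ν b - besselJ ν a = ∑' m : ℕ,
      (((-1:ℝ)^m / (m.factorial * Real.Gamma ((m:ℝ)+ν+1))) * (b/2)^(2*(m:ℝ)+ν)
       - ((-1:ℝ)^m / (m.factorial * Real.Gamma ((m:ℝ)+ν+1))) * (a/2)^(2*(m:ℝ)+ν)) :=
    (Summable.tsum_sub hsb hsa).symm
  have habs : |besselJ ν b - besselJ ν a| ≤ ∑' m : ℕ, bound m := by
    rw [hJ]
    refine le_trans ?_ (Summable.tsum_le_tsum hdm_le habs_sum hboundsum)
    simpa [Real.norm_eq_abs] using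
      norm_tsum_le_tsum_norm (f := fun m : ℕ =>
        ((-1:ℝ)^m / (m.factorial * Real.Gamma ((m:ℝ)+ν+1))) * (b/2)^(2*(m:ℝ)+ν)
         - ((-1:ℝ)^m / (m.factorial * Real.Gamma ((m:ℝ)+ν+1))) * (a/2)^(2*(m:ℝ)+ν))
        (by simpa [Real.norm_eq_abs] using habs_sum)
  have htsum_bound : ∑' m, bound m = (D * u^(ν-1) * (|b-a|/2)) * S := by
    rw [hbound_def, hS_def]; exact tsum_mul_left
  have hupow : u^(ν-1) * u^2 = u^(α+3/2) := by
    have h2 : u^(2:ℕ) = u^((2:ℝ)) := by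
      rw [← Real.rpow_natCast u 2]; norm_num
    rw [h2, ← Real.rpow_add hu, show ν - 1 + 2 = α + 3/2 by rw [hν_def]; ring]
  have hfinal : (D * u^(ν-1) * (|b-a|/2)) * S ≤ D*S*K/(2*ψ₀^2) * u^(α+3/2)/(n:ℝ) := by
    have hrpnn : (0:ℝ) ≤ u^(ν-1) := Real.rpow_nonneg hu.le _
    have step : (D * u^(ν-1) * S / 2) * |b-a| ≤ (D * u^(ν-1) * S / 2) * (K*u^2/(ψ₀^2*(n:ℝ))) :=
      mul_le_mul_of_nonneg_left hdiff (by positivity)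
    calc (D * u^(ν-1) * (|b-a|/2)) * S = (D * u^(ν-1) * S / 2) * |b-a| := by ring
      _ ≤ (D * u^(ν-1) * S / 2) * (K*u^2/(ψ₀^2*(n:ℝ))) := step
      _ = D*S*K/(2*ψ₀^2) * (u^(ν-1) * u^2)/(n:ℝ) := by field_simp
      _ = D*S*K/(2*ψ₀^2) * u^(α+3/2)/(n:ℝ) := by rw [hupow]
  calc |besselJ ν b - besselJ ν a| ≤ ∑' m, bound m := habs
    _ = (D * u^(ν-1) * (|b-a|/2)) * S := htsum_bound
    _ ≤ D*S*K/(2*ψ₀^2) * u^(α+3/2)/(n:ℝ) := hfinal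
end

section
/- Let α > −1/2, ψ₀ > 0, δ > 0, and let f be an analytic function on {|z| < δ}, real-valued on (−δ, δ), with f(z) = πψ₀·z + O(z²) as z → 0. For u > 0 and n large enough, set ũ_n = n·f(u/(n·ψ₀)). Then J_{α−1/2}(ũ_n) = J_{α−1/2}(πu) + O(u^{α+1/2}/n) as n → ∞, uniformly for u in bounded subsets of (0,∞): for every bounded B ⊂ (0,∞) there exist C and n₀ such that |J_{α−1/2}(ũ_n) − J_{α−1/2}(πu)| ≤ C·u^{α+1/2}/n for all u ∈ B and n ≥ n₀. -/
open Filter Set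

-- pow difference bound
lemma abs_pow_sub_pow_le_aux {a b T : ℝ} (ha : |a| ≤ T) (hb : |b| ≤ T) :
    ∀ m : ℕ, |a ^ m - b ^ m| ≤ m * T ^ (m - 1) * |a - b| := by
  have hT : 0 ≤ T := le_trans (abs_nonneg a) ha
  intro m
  induction m with
  | zero => simp
  | succ m ih =>
    have key : a ^ (m+1) - b ^ (m+1) = a * (a ^ m - b ^ m) + (a - b) * b ^ m := by ring
    have h1 : |a * (a ^ m - b ^ m)| ≤ T * (m * T ^ (m-1) * |a - b|) := by
      rw [abs_mul]
      exact mul_le_mul ha ih (abs_nonneg _) hT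
    have h2 : |(a - b) * b ^ m| ≤ T ^ m * |a - b| := by
      rw [abs_mul, mul_comm]
      have : |b ^ m| ≤ T ^ m := by
        rw [abs_pow]; exact pow_le_pow_left₀ (abs_nonneg b) hb m
      exact mul_le_mul_of_nonneg_right this (abs_nonneg _)
    have h3 : T * (m * T ^ (m-1) * |a - b|) ≤ m * T ^ m * |a - b| := by
      rcases Nat.eq_zero_or_pos m with hm | hm
      · simp [hm]
      · have : T * T ^ (m - 1) = T ^ m := by
          rw [← pow_succ']
          congr 1
          omega
        rw [← this]; ring_nf; exact le_refl _
    calc |a ^ (m+1) - b ^ (m+1)| ≤ |a * (a ^ m - b ^ m)| + |(a - b) * b ^ m| := by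
          rw [key]; exact abs_add_le _ _
      _ ≤ m * T ^ m * |a - b| + T ^ m * |a - b| := add_le_add (le_trans h1 h3) h2
      _ ≤ (m + 1 : ℕ) * T ^ ((m+1) - 1) * |a - b| := by push_cast [Nat.add_sub_cancel]; ring_nf; exact le_refl _

-- rpow mean value bound
lemma abs_rpow_sub_rpow_le (ν : ℝ) {p q a b : ℝ} (hp : 0 < p) (ha : a ∈ Icc p q) (hb : b ∈ Icc p q) :
    |a ^ ν - b ^ ν| ≤ |ν| * max (p ^ (ν - 1)) (q ^ (ν - 1)) * |a - b| := by
  have hconv : Convex ℝ (Icc p q) := convex_Icc p q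
  have hder : ∀ x ∈ Icc p q, HasDerivWithinAt (fun t : ℝ => t ^ ν) (ν * x ^ (ν - 1)) (Icc p q) x := by
    intro x hx
    exact (Real.hasDerivAt_rpow_const (Or.inl (ne_of_gt (lt_of_lt_of_le hp hx.1)))).hasDerivWithinAt
  have hbound : ∀ x ∈ Icc p q, ‖ν * x ^ (ν - 1)‖ ≤ |ν| * max (p ^ (ν - 1)) (q ^ (ν - 1)) := by
    intro x hx
    have hx0 : 0 < x := lt_of_lt_of_le hp hx.1
    have hxle : x ^ (ν - 1) ≤ max (p ^ (ν - 1)) (q ^ (ν - 1)) := by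
      rcases le_or_gt 0 (ν - 1) with h | h
      · exact le_trans (Real.rpow_le_rpow hx0.le hx.2 h) (le_max_right _ _)
      · exact le_trans (Real.rpow_le_rpow_of_nonpos hp hx.1 h.le) (le_max_left _ _)
    calc ‖ν * x ^ (ν - 1)‖ = |ν| * |x ^ (ν - 1)| := abs_mul _ _
      _ = |ν| * x ^ (ν - 1) := by rw [abs_of_nonneg (Real.rpow_nonneg hx0.le _)]
      _ ≤ |ν| * max (p ^ (ν - 1)) (q ^ (ν - 1)) := by
          exact mul_le_mul_of_nonneg_left hxle (abs_nonneg ν)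
  have := hconv.norm_image_sub_le_of_norm_hasDerivWithin_le hder hbound hb ha
  simpa [Real.norm_eq_abs] using this

noncomputable def bC (ν : ℝ) (m : ℕ) : ℝ :=
  (-1 : ℝ) ^ m / (m.factorial * Real.Gamma ((m : ℝ) + ν + 1))

noncomputable def bH (ν t : ℝ) : ℝ := ∑' m : ℕ, bC ν m * t ^ m

lemma gamma_pos (ν : ℝ) (hν : -1 < ν) (m : ℕ) : 0 < Real.Gamma ((m : ℝ) + ν + 1) := by
  apply Real.Gamma_pos_of_pos
  have : (0:ℝ) ≤ (m:ℝ) := Nat.cast_nonneg m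
  linarith

lemma gamma_ge (ν : ℝ) (hν : -1 < ν) : ∀ m : ℕ, 1 ≤ m →
    Real.Gamma (ν + 2) * (m - 1).factorial ≤ Real.Gamma ((m : ℝ) + ν + 1) := by
  intro m hm
  induction m, hm using Nat.le_induction with
  | base =>
    simp only [Nat.sub_self, Nat.factorial_zero, Nat.cast_one]
    rw [mul_one]
    apply le_of_eq; congr 1; ring
  | succ m hm ih =>
    have hrec : Real.Gamma ((m + 1 : ℕ) + ν + 1) = ((m:ℝ) + ν + 1) * Real.Gamma ((m:ℝ) + ν + 1) := by
      have h1 : ((m + 1 : ℕ) : ℝ) + ν + 1 = ((m:ℝ) + ν + 1) + 1 := by push_cast; ring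
      rw [h1, Real.Gamma_add_one]
      have : (0:ℝ) ≤ (m:ℝ) := Nat.cast_nonneg m
      intro h; linarith [h.symm.le]
    rw [hrec]
    have hfac : ((m + 1 - 1).factorial : ℝ) = (m:ℝ) * ((m - 1).factorial : ℝ) := by
      rw [Nat.add_sub_cancel, ← Nat.mul_factorial_pred (by omega)]
      push_cast; ring
    rw [hfac]
    have hgpos := gamma_pos ν hν m
    have hmle : (m:ℝ) ≤ (m:ℝ) + ν + 1 := by linarith
    have hmpos : (0:ℝ) < m := by exact_mod_cast hm
    calc Real.Gamma (ν + 2) * ((m:ℝ) * ((m - 1).factorial : ℝ))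
        = (m:ℝ) * (Real.Gamma (ν + 2) * ((m - 1).factorial : ℝ)) := by ring
      _ ≤ (m:ℝ) * Real.Gamma ((m:ℝ) + ν + 1) := by
          exact mul_le_mul_of_nonneg_left ih hmpos.le
      _ ≤ ((m:ℝ) + ν + 1) * Real.Gamma ((m:ℝ) + ν + 1) := by
          exact mul_le_mul_of_nonneg_right hmle hgpos.le

/-- The constant `A ν`. -/
noncomputable def bA (ν : ℝ) : ℝ := max (1 / Real.Gamma (ν + 1)) (1 / Real.Gamma (ν + 2))

lemma bA_pos (ν : ℝ) (hν : -1 < ν) : 0 < bA ν := by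
  have h1 : 0 < Real.Gamma (ν + 1) := Real.Gamma_pos_of_pos (by linarith)
  exact lt_max_of_lt_left (by positivity)

lemma abs_bC (ν : ℝ) (hν : -1 < ν) (m : ℕ) :
    |bC ν m| = 1 / (m.factorial * Real.Gamma ((m : ℝ) + ν + 1)) := by
  have hg := gamma_pos ν hν m
  have hf : (0:ℝ) < m.factorial := by exact_mod_cast m.factorial_pos
  rw [bC, abs_div, abs_pow, abs_neg, abs_one, one_pow, abs_of_pos (by positivity)]

lemma abs_bC_le (ν : ℝ) (hν : -1 < ν) (m : ℕ) :
    |bC ν m| ≤ bA ν / (m.factorial * (m - 1).factorial) := by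
  rw [abs_bC ν hν m]
  have hg := gamma_pos ν hν m
  have hf : (0:ℝ) < m.factorial := by exact_mod_cast m.factorial_pos
  have hf1 : (0:ℝ) < (m-1).factorial := by exact_mod_cast (m-1).factorial_pos
  rcases Nat.eq_zero_or_pos m with hm | hm
  · subst hm
    simp only [Nat.factorial_zero, Nat.cast_one, Nat.zero_sub]
    have : ((0:ℕ):ℝ) + ν + 1 = ν + 1 := by push_cast; ring
    rw [this]
    simp only [one_mul, mul_one]
    rw [bA, div_one]
    exact le_max_left _ _
  · have key : Real.Gamma (ν + 2) * (m - 1).factorial ≤ Real.Gamma ((m : ℝ) + ν + 1) :=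
      gamma_ge ν hν m hm
    have hg2 : 0 < Real.Gamma (ν + 2) := Real.Gamma_pos_of_pos (by linarith)
    have step1 : 1 / (m.factorial * Real.Gamma ((m:ℝ) + ν + 1)) ≤
        1 / (m.factorial * (Real.Gamma (ν + 2) * (m - 1).factorial)) := by
      apply one_div_le_one_div_of_le (by positivity)
      exact mul_le_mul_of_nonneg_left key hf.le
    refine le_trans step1 ?_
    rw [div_le_div_iff₀ (by positivity) (by positivity)]
    have : (1:ℝ) / Real.Gamma (ν + 2) ≤ bA ν := le_max_right _ _
    rw [div_le_iff₀ hg2] at this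
    have hA : 0 < bA ν := bA_pos ν hν
    nlinarith [mul_le_mul_of_nonneg_right this (mul_nonneg hf.le hf1.le)]

lemma abs_bC_le' (ν : ℝ) (hν : -1 < ν) (m : ℕ) : |bC ν m| ≤ bA ν / m.factorial := by
  have hf : (0:ℝ) < m.factorial := by exact_mod_cast m.factorial_pos
  have hf1 : (1:ℝ) ≤ (m-1).factorial := by exact_mod_cast (m-1).factorial_pos
  have hA : (0:ℝ) ≤ bA ν := (bA_pos ν hν).le
  refine le_trans (abs_bC_le ν hν m) ?_
  rw [div_le_div_iff₀ (by positivity) hf]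
  nlinarith [mul_le_mul_of_nonneg_left hf1 (mul_nonneg hA hf.le)]

lemma norm_term_le (ν : ℝ) (hν : -1 < ν) {t T : ℝ} (ht : |t| ≤ T) (m : ℕ) :
    ‖bC ν m * t ^ m‖ ≤ bA ν * (T ^ m / m.factorial) := by
  have hf : (0:ℝ) < m.factorial := by exact_mod_cast m.factorial_pos
  have hA : (0:ℝ) ≤ bA ν := (bA_pos ν hν).le
  have hT : (0:ℝ) ≤ T := le_trans (abs_nonneg t) ht
  rw [Real.norm_eq_abs, abs_mul, abs_pow]
  calc |bC ν m| * |t| ^ m ≤ (bA ν / m.factorial) * T ^ m := by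
        apply mul_le_mul (abs_bC_le' ν hν m) (pow_le_pow_left₀ (abs_nonneg t) ht m)
          (by positivity) (div_nonneg hA hf.le)
    _ = bA ν * (T ^ m / m.factorial) := by ring

lemma summable_bC_pow (ν : ℝ) (hν : -1 < ν) {t T : ℝ} (ht : |t| ≤ T) :
    Summable (fun m : ℕ => bC ν m * t ^ m) :=
  Summable.of_norm_bounded (g := fun m : ℕ => bA ν * (T ^ m / m.factorial))
    ((Real.summable_pow_div_factorial T).mul_left (bA ν)) (norm_term_le ν hν ht)

lemma summable_bC_lip (ν : ℝ) (hν : -1 < ν) {T : ℝ} (hT : 0 ≤ T) :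
    Summable (fun m : ℕ => (m : ℝ) * |bC ν m| * T ^ (m - 1)) := by
  rw [← summable_nat_add_iff 1]
  apply Summable.of_norm_bounded (g := fun m : ℕ => bA ν * (T ^ m / m.factorial))
    ((Real.summable_pow_div_factorial T).mul_left (bA ν))
  intro m
  simp only [Nat.add_sub_cancel]
  have hf : (0:ℝ) < m.factorial := by exact_mod_cast m.factorial_pos
  have hA : (0:ℝ) ≤ bA ν := (bA_pos ν hν).le
  have hc : |bC ν (m+1)| ≤ bA ν / ((m+1).factorial * m.factorial) := by
    have := abs_bC_le ν hν (m+1)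
    simpa using this
  have hnn : (0:ℝ) ≤ ((m:ℝ)+1) * |bC ν (m+1)| * T ^ m := by positivity
  rw [Real.norm_eq_abs, abs_of_nonneg (by push_cast; exact hnn)]
  have hfac : ((m+1).factorial : ℝ) = ((m:ℝ)+1) * m.factorial := by
    rw [Nat.factorial_succ]; push_cast; ring
  calc ((m+1:ℕ):ℝ) * |bC ν (m+1)| * T ^ m
      ≤ ((m:ℝ)+1) * (bA ν / ((m+1).factorial * m.factorial)) * T ^ m := by
        push_cast
        exact mul_le_mul_of_nonneg_right (mul_le_mul_of_nonneg_left hc (by positivity)) (by positivity)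
    _ = (bA ν / (m.factorial * m.factorial)) * T ^ m := by
        rw [hfac]; field_simp
    _ ≤ bA ν * (T ^ m / m.factorial) := by
        rw [div_mul_eq_mul_div, mul_div_assoc]
        have h1 : T ^ m / (m.factorial * m.factorial : ℝ) ≤ T ^ m / m.factorial := by
          have hf1 : (1:ℝ) ≤ m.factorial := by exact_mod_cast m.factorial_pos
          apply div_le_div_of_nonneg_left (by positivity) hf
          nlinarith [mul_le_mul_of_nonneg_left hf1 hf.le]
        exact mul_le_mul_of_nonneg_left h1 hA

lemma bH_bound (ν : ℝ) (hν : -1 < ν) {t T : ℝ} (ht : |t| ≤ T) :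
    |bH ν t| ≤ ∑' m : ℕ, bA ν * (T ^ m / m.factorial) := by
  have hsum : Summable (fun m : ℕ => bA ν * (T ^ m / m.factorial)) :=
    (Real.summable_pow_div_factorial T).mul_left (bA ν)
  have hnorm : Summable (fun m : ℕ => ‖bC ν m * t ^ m‖) :=
    Summable.of_nonneg_of_le (fun m => norm_nonneg _) (norm_term_le ν hν ht) hsum
  calc |bH ν t| ≤ ∑' m : ℕ, ‖bC ν m * t ^ m‖ := by
        rw [bH, ← Real.norm_eq_abs]; exact norm_tsum_le_tsum_norm hnorm
    _ ≤ ∑' m : ℕ, bA ν * (T ^ m / m.factorial) :=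
        Summable.tsum_le_tsum (norm_term_le ν hν ht) hnorm hsum

lemma bH_lip (ν : ℝ) (hν : -1 < ν) {a b T : ℝ} (ha : |a| ≤ T) (hb : |b| ≤ T) :
    |bH ν a - bH ν b| ≤ (∑' m : ℕ, (m : ℝ) * |bC ν m| * T ^ (m - 1)) * |a - b| := by
  have hT : 0 ≤ T := le_trans (abs_nonneg a) ha
  have hsa := summable_bC_pow ν hν ha
  have hsb := summable_bC_pow ν hν hb
  have hsub : bH ν a - bH ν b = ∑' m : ℕ, (bC ν m * a ^ m - bC ν m * b ^ m) := by
    rw [bH, bH, Summable.tsum_sub hsa hsb]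
  have hbound : ∀ m : ℕ, ‖bC ν m * a ^ m - bC ν m * b ^ m‖ ≤
      (m : ℝ) * |bC ν m| * T ^ (m - 1) * |a - b| := by
    intro m
    rw [Real.norm_eq_abs, ← mul_sub, abs_mul]
    calc |bC ν m| * |a ^ m - b ^ m| ≤ |bC ν m| * ((m : ℝ) * T ^ (m-1) * |a - b|) :=
          mul_le_mul_of_nonneg_left (abs_pow_sub_pow_le_aux ha hb m) (abs_nonneg _)
      _ = (m : ℝ) * |bC ν m| * T ^ (m - 1) * |a - b| := by ring
  have hsl : Summable (fun m : ℕ => (m : ℝ) * |bC ν m| * T ^ (m - 1) * |a - b|) :=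
    (summable_bC_lip ν hν hT).mul_right _
  have hnorm : Summable (fun m : ℕ => ‖bC ν m * a ^ m - bC ν m * b ^ m‖) :=
    Summable.of_nonneg_of_le (fun m => norm_nonneg _) hbound hsl
  calc |bH ν a - bH ν b| ≤ ∑' m : ℕ, ‖bC ν m * a ^ m - bC ν m * b ^ m‖ := by
        rw [hsub, ← Real.norm_eq_abs]; exact norm_tsum_le_tsum_norm hnorm
    _ ≤ ∑' m : ℕ, (m : ℝ) * |bC ν m| * T ^ (m - 1) * |a - b| :=
        Summable.tsum_le_tsum hbound hnorm hsl
    _ = (∑' m : ℕ, (m : ℝ) * |bC ν m| * T ^ (m - 1)) * |a - b| := tsum_mul_right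

lemma besselJ_eq_bH (ν : ℝ) {x : ℝ} (hx : 0 < x) :
    besselJ ν x = (x / 2) ^ ν * bH ν ((x / 2) ^ 2) := by
  have h2 : 0 < x / 2 := by linarith
  have hterm : ∀ m : ℕ,
      ((-1 : ℝ) ^ m / (m.factorial * Real.Gamma ((m : ℝ) + ν + 1))) *
        (x / 2) ^ (2 * (m : ℝ) + ν)
      = (x / 2) ^ ν * (bC ν m * ((x / 2) ^ 2) ^ m) := by
    intro m
    have e1 : (x / 2 : ℝ) ^ (2 * (m : ℝ) + ν) = (x / 2) ^ (2 * (m : ℝ)) * (x / 2) ^ ν :=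
      Real.rpow_add h2 _ _
    have e2 : (x / 2 : ℝ) ^ (2 * (m : ℝ)) = ((x / 2) ^ 2) ^ m := by
      have : (2 * (m : ℝ)) = ((2 * m : ℕ) : ℝ) := by push_cast; ring
      rw [this, Real.rpow_natCast, pow_mul]
    rw [e1, e2, bC]
    ring
  rw [besselJ, tsum_congr hterm, tsum_mul_left, bH]

lemma analytic_quad_bound (f : ℂ → ℂ) (c : ℂ) (hfa : AnalyticAt ℂ f 0) (hf0 : f 0 = 0)
    (hf' : deriv f 0 = c) :
    ∃ M r : ℝ, 0 < M ∧ 0 < r ∧ ∀ z : ℂ, ‖z‖ ≤ r → ‖f z - c * z‖ ≤ M * ‖z‖ ^ 2 := by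
  obtain ⟨p, hp⟩ := hfa
  have hp1 : HasFPowerSeriesAt (dslope f 0) p.fslope 0 := hp.has_fpower_series_dslope_fslope
  have hp2 : HasFPowerSeriesAt (dslope (dslope f 0) 0) p.fslope.fslope 0 :=
    hp1.has_fpower_series_dslope_fslope
  set g₂ : ℂ → ℂ := dslope (dslope f 0) 0 with hg₂
  have hg2a : AnalyticAt ℂ g₂ 0 := ⟨_, hp2⟩
  have hcont : ContinuousAt g₂ 0 := hg2a.continuousAt
  obtain ⟨ε, hε, hballs⟩ := Metric.continuousAt_iff.mp hcont 1 one_pos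
  refine ⟨‖g₂ 0‖ + 1, ε / 2, by positivity, by positivity, ?_⟩
  intro z hz
  have hid : f z - c * z = z ^ 2 * g₂ z := by
    have h1 : (z - 0) • dslope f 0 z = f z - f 0 := sub_smul_dslope f 0 z
    have h2 : (z - 0) • g₂ z = dslope f 0 z - dslope f 0 0 := sub_smul_dslope (dslope f 0) 0 z
    have h3 : dslope f 0 0 = c := by rw [dslope_same, hf']
    simp only [sub_zero, smul_eq_mul, hf0] at h1 h2
    rw [h3] at h2
    have : dslope f 0 z = c + z * g₂ z := by linear_combination -h2
    rw [← h1, this]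
    ring
  have hnz : ‖g₂ z‖ ≤ ‖g₂ 0‖ + 1 := by
    have hd : dist z 0 < ε := by
      rw [dist_zero_right]; linarith
    have h4 : dist (g₂ z) (g₂ 0) < 1 := hballs hd
    have h5 : ‖g₂ z - g₂ 0‖ < 1 := by rwa [← dist_eq_norm]
    calc ‖g₂ z‖ = ‖g₂ 0 + (g₂ z - g₂ 0)‖ := by ring_nf
      _ ≤ ‖g₂ 0‖ + ‖g₂ z - g₂ 0‖ := norm_add_le _ _
      _ ≤ ‖g₂ 0‖ + 1 := by linarith
  calc ‖f z - c * z‖ = ‖z‖ ^ 2 * ‖g₂ z‖ := by rw [hid, norm_mul, norm_pow]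
    _ ≤ ‖z‖ ^ 2 * (‖g₂ 0‖ + 1) := by
        exact mul_le_mul_of_nonneg_left hnz (by positivity)
    _ = (‖g₂ 0‖ + 1) * ‖z‖ ^ 2 := by ring

set_option maxHeartbeats 1000000 in
/-- With `ũ_n = n·f(u/(nψ₀))`, one has
`J_{α−1/2}(ũ_n) = J_{α−1/2}(πu) + O(u^{α+1/2}/n)`, uniformly for `u` in bounded subsets
of `(0,∞)`. -/
theorem besselJ_minus_asymptotics
    (α ψ₀ δ : ℝ) (hα : -1/2 < α) (hψ₀ : 0 < ψ₀) (hδ : 0 < δ)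
    (f : ℂ → ℂ)
    (hfan : ∀ z ∈ Metric.ball (0 : ℂ) δ, AnalyticAt ℂ f z)
    (hfreal : ∀ x : ℝ, x ∈ Ioo (-δ) δ → (f ((x : ℝ) : ℂ)).im = 0)
    (hf0 : f 0 = 0)
    (hf' : deriv f 0 = (Real.pi : ℂ) * (ψ₀ : ℂ)) :
    ∀ B : Set ℝ, B ⊆ Ioi 0 → Bornology.IsBounded B →
      ∃ C : ℝ, ∃ n₀ : ℕ, ∀ u ∈ B, ∀ n : ℕ, n₀ ≤ n →
        |besselJ (α - 1/2) ((n : ℝ) * (f (((u / ((n : ℝ) * ψ₀)) : ℝ) : ℂ)).re) -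
          besselJ (α - 1/2) (Real.pi * u)| ≤ C * u ^ (α + 1/2) / n := by
  have hπ : (0:ℝ) < Real.pi := Real.pi_pos
  set ν : ℝ := α - 1/2 with hνdef
  have hν : -1 < ν := by rw [hνdef]; linarith
  have hfa : AnalyticAt ℂ f 0 := hfan 0 (by simpa [Metric.mem_ball] using hδ)
  obtain ⟨M, r, hM, hr, hquad⟩ :=
    analytic_quad_bound f ((Real.pi : ℂ) * (ψ₀ : ℂ)) hfa hf0 hf'
  intro B hB hBb
  obtain ⟨R₀, hR₀⟩ := hBb.exists_norm_le
  set R : ℝ := max R₀ 1 with hRdef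
  have hR1 : (1:ℝ) ≤ R := le_max_right _ _
  have hRpos : (0:ℝ) < R := lt_of_lt_of_le one_pos hR1
  set K : ℝ := M / ψ₀ ^ 2 with hKdef
  have hK : 0 < K := by positivity
  set T : ℝ := (3 * Real.pi * R / 4) ^ 2 with hTdef
  have hT0 : 0 ≤ T := sq_nonneg _
  set HB : ℝ := ∑' m : ℕ, bA ν * (T ^ m / m.factorial) with hHBdef
  have hHB0 : 0 ≤ HB := tsum_nonneg (fun m => by
    have : (0:ℝ) ≤ bA ν := (bA_pos ν hν).le
    positivity)
  set L : ℝ := ∑' m : ℕ, (m : ℝ) * |bC ν m| * T ^ (m - 1) with hLdef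
  have hL0 : 0 ≤ L := tsum_nonneg (fun m => by positivity)
  set c₁ : ℝ := |ν| * max ((Real.pi / 4) ^ (ν - 1)) (Real.pi ^ (ν - 1)) with hc₁def
  have hc₁0 : 0 ≤ c₁ := mul_nonneg (abs_nonneg ν)
    (le_max_of_le_left (Real.rpow_nonneg (by positivity) _))
  set C : ℝ := c₁ * HB * K / 2 + (Real.pi / 2) ^ ν * L * (5 * Real.pi * K / 8) * R ^ 2 with hCdef
  set n₀ : ℕ := max (Nat.ceil (R / (r * ψ₀))) (max (Nat.ceil (2 * K * R / Real.pi)) 1) with hn₀def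
  refine ⟨C, n₀, ?_⟩
  intro u hu n hn
  have hu0 : 0 < u := hB hu
  have huR : u ≤ R := by
    have := hR₀ u hu
    rw [Real.norm_eq_abs] at this
    exact le_trans (le_trans (le_abs_self u) this) (le_max_left _ _)
  have hn1 : 1 ≤ n := le_trans (le_trans (le_max_right _ 1) (le_max_right _ _)) hn
  have hn0 : (0:ℝ) < n := by exact_mod_cast hn1
  have hnR : R / (r * ψ₀) ≤ (n : ℝ) := by
    refine le_trans (Nat.le_ceil _) ?_
    exact_mod_cast le_trans (le_max_left _ _) hn
  have hnK : 2 * K * R / Real.pi ≤ (n : ℝ) := by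
    refine le_trans (Nat.le_ceil _) ?_
    exact_mod_cast le_trans (le_trans (le_max_left _ 1) (le_max_right _ _)) hn
  set z : ℝ := u / ((n : ℝ) * ψ₀) with hzdef
  have hz0 : 0 < z := by rw [hzdef]; positivity
  have hzr : z ≤ r := by
    rw [hzdef, div_le_iff₀ (by positivity)]
    rw [div_le_iff₀ (by positivity)] at hnR
    have heq : (n:ℝ) * (r * ψ₀) = r * ((n:ℝ) * ψ₀) := by ring
    linarith
  have hznorm : ‖(z : ℂ)‖ ≤ r := by
    rw [Complex.norm_real, Real.norm_eq_abs, abs_of_pos hz0]; exact hzr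
  have hquadz : ‖f (z : ℂ) - (Real.pi : ℂ) * (ψ₀ : ℂ) * (z : ℂ)‖ ≤ M * z ^ 2 := by
    have := hquad (z : ℂ) hznorm
    rwa [Complex.norm_real, Real.norm_eq_abs, abs_of_pos hz0] at this
  set ut : ℝ := (n : ℝ) * (f (z : ℂ)).re with hutdef
  have hre : ((Real.pi : ℂ) * (ψ₀ : ℂ) * (z : ℂ)).re = Real.pi * ψ₀ * z := by
    have h1 : (Real.pi : ℂ) * (ψ₀ : ℂ) * (z : ℂ) = ((Real.pi * ψ₀ * z : ℝ) : ℂ) := by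
      push_cast; ring
    rw [h1, Complex.ofReal_re]
  have hπuz : Real.pi * ψ₀ * z * n = Real.pi * u := by
    rw [hzdef]; field_simp
  have key : |ut - Real.pi * u| ≤ K * u ^ 2 / n := by
    have h1 : ut - Real.pi * u = (n : ℝ) * ((f (z : ℂ)).re - Real.pi * ψ₀ * z) := by
      rw [hutdef, ← hπuz]; ring
    have h2 : |(f (z : ℂ)).re - Real.pi * ψ₀ * z| ≤ M * z ^ 2 := by
      rw [← hre, ← Complex.sub_re]
      exact le_trans (Complex.abs_re_le_norm _) hquadz
    have h3 : (n:ℝ) * (M * z ^ 2) = K * u ^ 2 / n := by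
      rw [hzdef, hKdef]; field_simp
    calc |ut - Real.pi * u| = (n : ℝ) * |(f (z : ℂ)).re - Real.pi * ψ₀ * z| := by
          rw [h1, abs_mul, abs_of_pos hn0]
      _ ≤ (n : ℝ) * (M * z ^ 2) := mul_le_mul_of_nonneg_left h2 hn0.le
      _ = K * u ^ 2 / n := h3
  have hKu : K * u ^ 2 / n ≤ Real.pi * u / 2 := by
    rw [div_le_iff₀ hπ] at hnK
    rw [div_le_div_iff₀ hn0 two_pos]
    calc K * u ^ 2 * 2 = (2 * K * u) * u := by ring
      _ ≤ (2 * K * u) * R := mul_le_mul_of_nonneg_left huR (by positivity)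
      _ = (2 * K * R) * u := by ring
      _ ≤ ((n:ℝ) * Real.pi) * u := mul_le_mul_of_nonneg_right hnK hu0.le
      _ = Real.pi * u * n := by ring
  have hcl : |ut - Real.pi * u| ≤ Real.pi * u / 2 := le_trans key hKu
  have hlo : Real.pi * u / 2 ≤ ut := by
    have := abs_le.mp hcl
    linarith [this.1]
  have hhi : ut ≤ 3 * Real.pi * u / 2 := by
    have := abs_le.mp hcl
    linarith [this.2]
  have hutpos : 0 < ut := lt_of_lt_of_le (by positivity) hlo
  have hπu : 0 < Real.pi * u := by positivity
  -- series expansions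
  have e1 : besselJ ν ut = (ut / 2) ^ ν * bH ν ((ut / 2) ^ 2) := besselJ_eq_bH ν hutpos
  have e2 : besselJ ν (Real.pi * u) =
      (Real.pi * u / 2) ^ ν * bH ν ((Real.pi * u / 2) ^ 2) := besselJ_eq_bH ν hπu
  -- argument bounds for bH
  have hπuR : Real.pi * u ≤ Real.pi * R := mul_le_mul_of_nonneg_left huR hπ.le
  have hut2T : |(ut / 2) ^ 2| ≤ T := by
    rw [abs_of_nonneg (sq_nonneg _), hTdef]
    have h1 : ut / 2 ≤ 3 * Real.pi * R / 4 := by linarith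
    exact pow_le_pow_left₀ (by positivity) h1 2
  have hπu2T : |(Real.pi * u / 2) ^ 2| ≤ T := by
    rw [abs_of_nonneg (sq_nonneg _), hTdef]
    have h1 : Real.pi * u / 2 ≤ 3 * Real.pi * R / 4 := by linarith
    exact pow_le_pow_left₀ (by positivity) h1 2
  -- term 1 bound
  have hmem1 : ut / 2 ∈ Icc (Real.pi * u / 4) (Real.pi * u) := by
    constructor <;> [linarith; linarith [hπu.le]]
  have hmem2 : Real.pi * u / 2 ∈ Icc (Real.pi * u / 4) (Real.pi * u) := by
    constructor <;> linarith [hπu.le]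
  have hrpow : |(ut / 2) ^ ν - (Real.pi * u / 2) ^ ν| ≤ c₁ * u ^ (ν - 1) * (K * u ^ 2 / n / 2) := by
    have h0 := abs_rpow_sub_rpow_le ν (by positivity : (0:ℝ) < Real.pi * u / 4) hmem1 hmem2
    have hmax : max ((Real.pi * u / 4) ^ (ν - 1)) ((Real.pi * u) ^ (ν - 1)) =
        max ((Real.pi / 4) ^ (ν - 1)) (Real.pi ^ (ν - 1)) * u ^ (ν - 1) := by
      rw [show Real.pi * u / 4 = (Real.pi / 4) * u by ring,
        Real.mul_rpow (by positivity) hu0.le, Real.mul_rpow hπ.le hu0.le,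
        max_mul_of_nonneg _ _ (Real.rpow_nonneg hu0.le _)]
    have habs : |ut / 2 - Real.pi * u / 2| ≤ K * u ^ 2 / n / 2 := by
      rw [show ut / 2 - Real.pi * u / 2 = (ut - Real.pi * u) / 2 by ring, abs_div]
      rw [abs_of_pos (by norm_num : (0:ℝ) < 2)]
      linarith
    calc |(ut / 2) ^ ν - (Real.pi * u / 2) ^ ν|
        ≤ |ν| * max ((Real.pi * u / 4) ^ (ν - 1)) ((Real.pi * u) ^ (ν - 1)) *
            |ut / 2 - Real.pi * u / 2| := h0
      _ = c₁ * u ^ (ν - 1) * |ut / 2 - Real.pi * u / 2| := by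
          rw [hmax, hc₁def]; ring
      _ ≤ c₁ * u ^ (ν - 1) * (K * u ^ 2 / n / 2) := by
          apply mul_le_mul_of_nonneg_left habs
          exact mul_nonneg hc₁0 (Real.rpow_nonneg hu0.le _)
  have hbH1 : |bH ν ((ut / 2) ^ 2)| ≤ HB := bH_bound ν hν hut2T
  -- term 2 bound
  have hlip : |bH ν ((ut / 2) ^ 2) - bH ν ((Real.pi * u / 2) ^ 2)| ≤
      L * (5 * Real.pi * K / 8 * (u ^ 3 / n)) := by
    have h0 := bH_lip ν hν hut2T hπu2T
    have hargs : |(ut / 2) ^ 2 - (Real.pi * u / 2) ^ 2| ≤ 5 * Real.pi * K / 8 * (u ^ 3 / n) := by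
      have hfact : (ut / 2) ^ 2 - (Real.pi * u / 2) ^ 2 =
          (ut - Real.pi * u) * ((ut + Real.pi * u) / 4) := by ring
      rw [hfact, abs_mul]
      have hsum : |(ut + Real.pi * u) / 4| ≤ 5 * Real.pi * u / 8 := by
        rw [abs_of_nonneg (by positivity)]
        linarith
      calc |ut - Real.pi * u| * |(ut + Real.pi * u) / 4|
          ≤ (K * u ^ 2 / n) * (5 * Real.pi * u / 8) := by
            apply mul_le_mul key hsum (abs_nonneg _) (by positivity)
        _ = 5 * Real.pi * K / 8 * (u ^ 3 / n) := by field_simp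
    calc |bH ν ((ut / 2) ^ 2) - bH ν ((Real.pi * u / 2) ^ 2)|
        ≤ L * |(ut / 2) ^ 2 - (Real.pi * u / 2) ^ 2| := h0
      _ ≤ L * (5 * Real.pi * K / 8 * (u ^ 3 / n)) := mul_le_mul_of_nonneg_left hargs hL0
  have hπu2 : (Real.pi * u / 2) ^ ν = (Real.pi / 2) ^ ν * u ^ ν := by
    rw [show Real.pi * u / 2 = (Real.pi / 2) * u by ring, Real.mul_rpow (by positivity) hu0.le]
  -- exponent juggling
  have hexp1 : u ^ (ν - 1) * u ^ 2 = u ^ (ν + 1) := by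
    rw [← Real.rpow_natCast u 2, ← Real.rpow_add hu0]
    norm_num
    congr 1
    ring
  have hexp2 : u ^ ν * u ^ 3 = u ^ (ν + 1) * u ^ 2 := by
    rw [← Real.rpow_natCast u 3, ← Real.rpow_natCast u 2, ← Real.rpow_add hu0,
      ← Real.rpow_add hu0]
    norm_num
    congr 1
    ring
  have hup : (0:ℝ) ≤ u ^ (ν + 1) := Real.rpow_nonneg hu0.le _
  have hπ2ν : (0:ℝ) ≤ (Real.pi / 2) ^ ν := Real.rpow_nonneg (by positivity) _
  -- assembly
  have hsplit : besselJ ν ut - besselJ ν (Real.pi * u) =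
      ((ut / 2) ^ ν - (Real.pi * u / 2) ^ ν) * bH ν ((ut / 2) ^ 2) +
        (Real.pi * u / 2) ^ ν * (bH ν ((ut / 2) ^ 2) - bH ν ((Real.pi * u / 2) ^ 2)) := by
    rw [e1, e2]; ring
  have ht1 : |((ut / 2) ^ ν - (Real.pi * u / 2) ^ ν) * bH ν ((ut / 2) ^ 2)| ≤
      c₁ * HB * K / 2 * (u ^ (ν + 1) / n) := by
    rw [abs_mul]
    calc |(ut / 2) ^ ν - (Real.pi * u / 2) ^ ν| * |bH ν ((ut / 2) ^ 2)|
        ≤ (c₁ * u ^ (ν - 1) * (K * u ^ 2 / n / 2)) * HB := by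
          apply mul_le_mul hrpow hbH1 (abs_nonneg _)
          positivity
      _ = c₁ * HB * K / 2 * ((u ^ (ν - 1) * u ^ 2) / n) := by ring
      _ = c₁ * HB * K / 2 * (u ^ (ν + 1) / n) := by rw [hexp1]
  have ht2 : |(Real.pi * u / 2) ^ ν * (bH ν ((ut / 2) ^ 2) - bH ν ((Real.pi * u / 2) ^ 2))| ≤
      (Real.pi / 2) ^ ν * L * (5 * Real.pi * K / 8) * R ^ 2 * (u ^ (ν + 1) / n) := by
    rw [abs_mul, abs_of_nonneg (Real.rpow_nonneg (by positivity : (0:ℝ) ≤ Real.pi * u / 2) ν), hπu2]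
    calc (Real.pi / 2) ^ ν * u ^ ν * |bH ν ((ut / 2) ^ 2) - bH ν ((Real.pi * u / 2) ^ 2)|
        ≤ (Real.pi / 2) ^ ν * u ^ ν * (L * (5 * Real.pi * K / 8 * (u ^ 3 / n))) := by
          apply mul_le_mul_of_nonneg_left hlip
          exact mul_nonneg hπ2ν (Real.rpow_nonneg hu0.le _)
      _ = (Real.pi / 2) ^ ν * L * (5 * Real.pi * K / 8) * ((u ^ ν * u ^ 3) / n) := by ring
      _ = (Real.pi / 2) ^ ν * L * (5 * Real.pi * K / 8) * ((u ^ (ν + 1) * u ^ 2) / n) := by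
          rw [hexp2]
      _ ≤ (Real.pi / 2) ^ ν * L * (5 * Real.pi * K / 8) * ((u ^ (ν + 1) * R ^ 2) / n) := by
          apply mul_le_mul_of_nonneg_left _ (by positivity)
          have h9 : u ^ (ν + 1) * u ^ 2 ≤ u ^ (ν + 1) * R ^ 2 :=
            mul_le_mul_of_nonneg_left (pow_le_pow_left₀ hu0.le huR 2) hup
          exact (div_le_div_iff_of_pos_right hn0).mpr h9
      _ = (Real.pi / 2) ^ ν * L * (5 * Real.pi * K / 8) * R ^ 2 * (u ^ (ν + 1) / n) := by
          ring
  have hfinal : |besselJ ν ut - besselJ ν (Real.pi * u)| ≤ C * (u ^ (ν + 1) / n) := by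
    rw [hsplit, hCdef]
    calc |((ut / 2) ^ ν - (Real.pi * u / 2) ^ ν) * bH ν ((ut / 2) ^ 2) +
        (Real.pi * u / 2) ^ ν * (bH ν ((ut / 2) ^ 2) - bH ν ((Real.pi * u / 2) ^ 2))|
        ≤ _ + _ := abs_add_le _ _
      _ ≤ c₁ * HB * K / 2 * (u ^ (ν + 1) / n) +
          (Real.pi / 2) ^ ν * L * (5 * Real.pi * K / 8) * R ^ 2 * (u ^ (ν + 1) / n) :=
            add_le_add ht1 ht2
      _ = (c₁ * HB * K / 2 + (Real.pi / 2) ^ ν * L * (5 * Real.pi * K / 8) * R ^ 2) *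
          (u ^ (ν + 1) / n) := by ring
  have hνα : ν + 1 = α + 1/2 := by rw [hνdef]; ring
  rw [hνα] at hfinal
  calc |besselJ ν ut - besselJ ν (Real.pi * u)| ≤ C * (u ^ (α + 1/2) / n) := hfinal
    _ = C * u ^ (α + 1/2) / n := by ring
end
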